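/- arXiv:1012.4925 — 8 statements merged into one kernel-verified Lean document; each statement's English description precedes it below -/
import Mathlib

section
/- Let U ⊆ ℂ² be a connected open neighborhood of the origin and let F : U → ℂ² be analytic with F(0,0) = (0,0). Assume that the derivative DF(0,0) is diagonalizable with eigenvalues λ and μ (i.e., there exist linearly independent vectors v, w ∈ ℂ² with DF(0,0)v = λv and DF(0,0)w = μw) and that λμ ≠ 0. If F admits a meromorphic first integral H = P/Q on U, then there exists a pair of integers (p,q) ≠ (0,0) such that λ^p · μ^q = 1 (integer powers, possibly negative). -/
open Filter Topology
open scoped ENNReal NNReal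

namespace MFIR

/-- `h` behaves like `t^m * (c + o(1))` near `0`. -/
def HOC (h : ℂ → ℂ) (m : ℕ) (c : ℂ) : Prop :=
  ∃ u : ℂ → ℂ, AnalyticAt ℂ u 0 ∧ u 0 = c ∧ ∀ᶠ t in 𝓝 (0 : ℂ), h t = t ^ m * u t

lemma HOC.congr {h h' : ℂ → ℂ} {m : ℕ} {c : ℂ} (H : HOC h m c)
    (he : h' =ᶠ[𝓝 (0:ℂ)] h) : HOC h' m c := by
  obtain ⟨u, hu, hu0, he'⟩ := H
  exact ⟨u, hu, hu0, he.trans he'⟩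

lemma HOC.mul {h g : ℂ → ℂ} {m n : ℕ} {c d : ℂ} (H : HOC h m c) (G : HOC g n d) :
    HOC (fun t => h t * g t) (m + n) (c * d) := by
  obtain ⟨u, hu, hu0, heu⟩ := H
  obtain ⟨v, hv, hv0, hev⟩ := G
  refine ⟨fun t => u t * v t, hu.mul hv, by simp [hu0, hv0], ?_⟩
  filter_upwards [heu, hev] with t h1 h2
  rw [h1, h2]; ring

lemma HOC.add {h g : ℂ → ℂ} {m : ℕ} {c d : ℂ} (H : HOC h m c) (G : HOC g m d) :
    HOC (fun t => h t + g t) m (c + d) := by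
  obtain ⟨u, hu, hu0, heu⟩ := H
  obtain ⟨v, hv, hv0, hev⟩ := G
  refine ⟨fun t => u t + v t, hu.add hv, by simp [hu0, hv0], ?_⟩
  filter_upwards [heu, hev] with t h1 h2
  rw [h1, h2]; ring

lemma HOC.unique {h : ℂ → ℂ} {m : ℕ} {c d : ℂ} (H : HOC h m c) (G : HOC h m d) : c = d := by
  obtain ⟨u, hu, hu0, heu⟩ := H
  obtain ⟨v, hv, hv0, hev⟩ := G
  have huv : u =ᶠ[𝓝[≠] (0:ℂ)] v := by
    filter_upwards [eventually_nhdsWithin_of_eventually_nhds heu,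
      eventually_nhdsWithin_of_eventually_nhds hev,
      self_mem_nhdsWithin] with t ht1 ht2 ht0
    exact mul_left_cancel₀ (pow_ne_zero m ht0) (ht1.symm.trans ht2)
  have h1 : Tendsto u (𝓝[≠] (0:ℂ)) (𝓝 c) := by
    refine Tendsto.mono_left ?_ nhdsWithin_le_nhds
    simpa [hu0] using hu.continuousAt.tendsto
  have h2 : Tendsto u (𝓝[≠] (0:ℂ)) (𝓝 d) := by
    refine Tendsto.congr' huv.symm ?_
    refine Tendsto.mono_left ?_ nhdsWithin_le_nhds
    simpa [hv0] using hv.continuousAt.tendsto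
  exact tendsto_nhds_unique h1 h2

lemma hoc_monomial {u : ℂ → ℂ} (hu : AnalyticAt ℂ u 0) (m : ℕ) :
    HOC (fun t => t ^ m * u t) m (u 0) := ⟨u, hu, rfl, by filter_upwards with t; rfl⟩

lemma hoc_zero (m : ℕ) : HOC (fun _ => (0:ℂ)) m 0 := by
  simpa using hoc_monomial (u := fun _ => (0:ℂ)) analyticAt_const m

lemma hoc_of_isBigO {h : ℂ → ℂ} {m : ℕ} (hh : AnalyticAt ℂ h 0)
    (hb : h =O[𝓝 (0:ℂ)] fun t => t ^ (m + 1)) : HOC h m 0 := by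
  rcases eq_or_ne (analyticOrderAt h 0) ⊤ with htop | hne
  · have h0 : h =ᶠ[𝓝 (0:ℂ)] 0 := analyticOrderAt_eq_top.mp htop
    exact (hoc_zero m).congr (by filter_upwards [h0] with t ht using ht)
  · lift analyticOrderAt h 0 to ℕ using hne with j hj
    obtain ⟨g, hg, hg0, hgf⟩ := (hh.analyticOrderAt_eq_natCast (n := j)).mp hj.symm
    have hgf' : ∀ᶠ t in 𝓝 (0:ℂ), h t = t ^ j * g t := by
      filter_upwards [hgf] with t ht; simpa [smul_eq_mul] using ht
    -- first show `m + 1 ≤ j`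
    have hjm : m + 1 ≤ j := by
      by_contra hlt
      push_neg at hlt
      have hg00 : Tendsto g (𝓝[≠] (0:ℂ)) (𝓝 0) := by
        have hbb : ∀ᶠ t in 𝓝[≠] (0:ℂ), ‖g t‖ ≤ ‖h t‖ / ‖t‖ ^ j := by
          filter_upwards [eventually_nhdsWithin_of_eventually_nhds hgf',
            self_mem_nhdsWithin] with t ht ht0
          rw [ht]
          rw [norm_mul, norm_pow, mul_comm, mul_div_assoc,
            div_self (pow_ne_zero _ (norm_ne_zero_iff.mpr ht0)), mul_one]
        obtain ⟨C, hC⟩ := hb.bound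
        have hbb2 : ∀ᶠ t in 𝓝[≠] (0:ℂ), ‖h t‖ / ‖t‖ ^ j ≤ C * ‖t‖ ^ (m + 1 - j) := by
          filter_upwards [eventually_nhdsWithin_of_eventually_nhds hC,
            self_mem_nhdsWithin] with t ht ht0
          rw [div_le_iff₀ (pow_pos (norm_pos_iff.mpr ht0) _)]
          calc ‖h t‖ ≤ C * ‖t ^ (m+1)‖ := ht
          _ = C * ‖t‖ ^ (m + 1 - j) * ‖t‖ ^ j := by
              rw [norm_pow, mul_assoc, ← pow_add]
              congr 2
              omega
        have hC0 : Tendsto (fun t : ℂ => C * ‖t‖ ^ (m + 1 - j)) (𝓝[≠] (0:ℂ)) (𝓝 0) := by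
          have : Tendsto (fun t : ℂ => C * ‖t‖ ^ (m + 1 - j)) (𝓝 (0:ℂ)) (𝓝 (C * ‖(0:ℂ)‖ ^ (m+1-j))) := by
            exact (tendsto_const_nhds.mul ((continuous_norm.tendsto _).pow _))
          simp only [norm_zero] at this
          rw [zero_pow (by omega), mul_zero] at this
          exact this.mono_left nhdsWithin_le_nhds
        refine squeeze_zero_norm' ?_ hC0
        filter_upwards [hbb, hbb2] with t h1 h2 using le_trans (by simpa using h1) h2
      have : g 0 = 0 := by
        have h2 : Tendsto g (𝓝[≠] (0:ℂ)) (𝓝 (g 0)) :=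
          (hg.continuousAt.tendsto).mono_left nhdsWithin_le_nhds
        exact tendsto_nhds_unique h2 hg00
      exact hg0 this
    refine ⟨fun t => t ^ (j - m) * g t, ?_, ?_, ?_⟩
    · exact ((analyticAt_id.pow _).mul hg)
    · simp [zero_pow (by omega : j - m ≠ 0)]
    · filter_upwards [hgf'] with t ht
      rw [ht, ← mul_assoc, ← pow_add]
      congr 2
      omega


abbrev E2 : Type := ℂ × ℂ

/-- Factor out `t` from an analytic curve vanishing at `0`. -/
lemma exists_div {γ : ℂ → E2} (hγ : AnalyticAt ℂ γ 0) (hγ0 : γ 0 = 0) :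
    ∃ η : ℂ → E2, AnalyticAt ℂ η 0 ∧ ∀ᶠ t in 𝓝 (0:ℂ), γ t = t • η t := by
  rcases eq_or_ne (analyticOrderAt γ 0) ⊤ with htop | hne
  · refine ⟨fun _ => 0, analyticAt_const, ?_⟩
    filter_upwards [analyticOrderAt_eq_top.mp htop] with t ht
    simp [ht]
  · lift analyticOrderAt γ 0 to ℕ using hne with j hj
    obtain ⟨g, hg, hg0, hgf⟩ := (hγ.analyticOrderAt_eq_natCast (n := j)).mp hj.symm
    have hj1 : 1 ≤ j := by
      rcases Nat.eq_zero_or_pos j with h0 | h1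
      · exfalso
        apply hg0
        have := hgf.self_of_nhds
        simpa [h0, hγ0] using this.symm
      · exact h1
    refine ⟨fun t => t ^ (j - 1) • g t, ((analyticAt_id.pow _).smul hg), ?_⟩
    filter_upwards [hgf] with t ht
    rw [ht, smul_smul]
    congr 1
    rw [sub_zero, ← pow_succ']
    congr 1
    omega

/-- diagonal evaluation of the `n`-th term of a power series -/
noncomputable def dg (p : FormalMultilinearSeries ℂ E2 ℂ) (n : ℕ) (z : E2) : ℂ :=
  p n (fun _ => z)

/-- The key local lemma: if all diagonal coefficients of `f` below `m` vanish identically,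
then along any analytic curve `γ` with `γ 0 = 0`, the function `f ∘ γ` has order-`m`
coefficient `p m` applied to the diagonal of `γ' 0`. -/
lemma mainE {f : E2 → ℂ} {p : FormalMultilinearSeries ℂ E2 ℂ}
    (hf : HasFPowerSeriesAt f p 0) {m : ℕ}
    (hm : ∀ k < m, ∀ z : E2, dg p k z = 0)
    {γ : ℂ → E2} (hγ : AnalyticAt ℂ γ 0) (hγ0 : γ 0 = 0) :
    HOC (fun t => f (γ t)) m (dg p m (deriv γ 0)) := by
  classical
  obtain ⟨η, hη, hηeq⟩ := exists_div hγ hγ0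
  -- η 0 = deriv γ 0
  have hη0 : η 0 = deriv γ 0 := by
    have h1 : HasDerivAt (fun t : ℂ => t • η t) (η 0) 0 := by
      have := (hasDerivAt_id (0:ℂ)).smul (hη.differentiableAt.hasDerivAt)
      simp only [id, zero_smul, one_smul, zero_add] at this
      exact this
    have h2 : deriv γ 0 = deriv (fun t : ℂ => t • η t) 0 :=
      Filter.EventuallyEq.deriv_eq hηeq
    rw [h2, h1.deriv]
  -- the diagonal inclusion as a CLM
  let D : E2 →L[ℂ] (Fin m → E2) := ContinuousLinearMap.pi fun _ => ContinuousLinearMap.id ℂ E2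
  have hv : AnalyticAt ℂ (fun t => p m (fun _ => η t)) 0 := by
    have h1 : AnalyticAt ℂ (⇑(p m)) (D (η 0)) := (p m).analyticAt
    have h2 : AnalyticAt ℂ (fun t => D (η t)) 0 := (D.analyticAt _).comp hη
    exact (h1.comp (D.analyticAt _)).comp hη
  -- the error term
  set ρ : ℂ → ℂ := fun t => f (γ t) - p.partialSum (m+1) (γ t) with hρ
  have hps : ∀ y : E2, p.partialSum (m+1) y = ∑ k ∈ Finset.range (m+1), dg p k y := fun y => rfl
  have hpsa : AnalyticAt ℂ (fun y : E2 => p.partialSum (m+1) y) (γ 0) := by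
    rw [hγ0]
    apply Finset.analyticAt_fun_sum
    intro k _
    exact (p k).analyticAt.comp ((ContinuousLinearMap.pi
      (fun _ : Fin k => ContinuousLinearMap.id ℂ E2)).analyticAt _)
  have hρa : AnalyticAt ℂ ρ 0 := by
    apply AnalyticAt.sub
    · exact (hγ0 ▸ hf.analyticAt).comp hγ
    · exact hpsa.comp hγ
  have hρO : ρ =O[𝓝 (0:ℂ)] fun t => t ^ (m+1) := by
    have h1 := (hf.isBigO_sub_partialSum_pow (m+1)).comp_tendsto
      (show Tendsto γ (𝓝 0) (𝓝 (0:E2)) by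
        simpa [hγ0] using hγ.continuousAt.tendsto)
    simp only [zero_add, Function.comp_def] at h1
    have h2 : γ =O[𝓝 (0:ℂ)] fun t => t := by
      have := hγ.differentiableAt.hasFDerivAt.isBigO_sub
      simpa [hγ0] using this
    calc ρ =O[𝓝 (0:ℂ)] fun t => ‖γ t‖ ^ (m+1) := h1
    _ =O[𝓝 (0:ℂ)] fun t => t ^ (m+1) := by
        simpa using (h2.norm_left.pow (m+1))
  have hρhoc : HOC ρ m 0 := hoc_of_isBigO hρa hρO
  -- main decomposition
  have hdec : (fun t => f (γ t)) =ᶠ[𝓝 (0:ℂ)]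
      fun t => ρ t + t ^ m * (p m (fun _ => η t)) := by
    filter_upwards [hηeq] with t ht
    have : p.partialSum (m+1) (γ t) = t ^ m * (p m (fun _ => η t)) := by
      rw [hps]
      rw [Finset.sum_eq_single m]
      · show dg p m (γ t) = _
        rw [ht]
        unfold dg
        have := (p m).toMultilinearMap.map_smul_univ (fun _ => t) (fun _ => η t)
        simp only [ContinuousMultilinearMap.coe_coe] at this
        rw [show (fun _ : Fin m => t • η t) = fun i : Fin m => (fun _ : Fin m => t) i • (fun _ : Fin m => η t) i from rfl]
        rw [this]
        simp [smul_eq_mul]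
      · intro k hk hkm
        exact hm k (by simp at hk; omega) _
      · intro h
        simp at h
    simp [hρ, this]
  have hfinal := (HOC.add hρhoc (hoc_monomial hv m)).congr hdec
  rw [zero_add, hη0] at hfinal
  exact hfinal

noncomputable def mcoeff (p : FormalMultilinearSeries ℂ E2 ℂ) (n i : ℕ) (v w : E2) : ℂ :=
  ∑ S ∈ Finset.univ.filter (fun S : Finset (Fin n) => S.card = i),
    p n (S.piecewise (fun _ => v) (fun _ => w))

lemma mlin_expand (p : FormalMultilinearSeries ℂ E2 ℂ) (n : ℕ) (v w : E2) (x y : ℂ) :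
    dg p n (x • v + y • w) =
      ∑ i ∈ Finset.range (n+1), mcoeff p n i v w * (x ^ i * y ^ (n - i)) := by
  classical
  unfold dg
  have h1 : (fun _ : Fin n => x • v + y • w)
      = (fun _ : Fin n => x • v) + (fun _ : Fin n => y • w) := rfl
  rw [h1]
  have h2 := (p n).toMultilinearMap.map_add_univ (fun _ : Fin n => x • v) (fun _ : Fin n => y • w)
  simp only [ContinuousMultilinearMap.coe_coe] at h2
  rw [h2]
  have h3 : ∀ S : Finset (Fin n),
      (p n) (S.piecewise (fun _ => x • v) (fun _ => y • w))
        = p n (S.piecewise (fun _ => v) (fun _ => w)) * (x ^ S.card * y ^ (n - S.card)) := by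
    intro S
    have harg : S.piecewise (fun _ : Fin n => x • v) (fun _ => y • w)
        = fun i => (if i ∈ S then x else y) • (S.piecewise (fun _ : Fin n => v) (fun _ => w)) i := by
      funext i
      by_cases hi : i ∈ S <;> simp [Finset.piecewise, hi]
    rw [harg]
    have h4 := (p n).toMultilinearMap.map_smul_univ (fun i => if i ∈ S then x else y)
      (S.piecewise (fun _ : Fin n => v) (fun _ => w))
    simp only [ContinuousMultilinearMap.coe_coe] at h4
    rw [h4, Finset.prod_ite, Finset.prod_const, Finset.prod_const, smul_eq_mul]
    rw [Finset.filter_mem_eq_inter, Finset.univ_inter, Finset.filter_not,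
      Finset.filter_mem_eq_inter, Finset.univ_inter, ← Finset.compl_eq_univ_sdiff,
      Finset.card_compl, Fintype.card_fin]
    ring
  rw [Finset.sum_congr rfl (fun S _ => h3 S)]
  rw [← Finset.sum_fiberwise_of_maps_to (g := fun S : Finset (Fin n) => S.card)
    (t := Finset.range (n+1))
    (fun S _ => Finset.mem_range_succ_iff.mpr (by simpa using S.card_le_univ)) _]
  apply Finset.sum_congr rfl
  intro i _
  unfold mcoeff
  rw [Finset.sum_mul]
  apply Finset.sum_congr rfl
  intro S hS
  have : S.card = i := by simpa using (Finset.mem_filter.mp hS).2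
  rw [this]

lemma span_vw {v w : E2} (hvw : LinearIndependent ℂ ![v, w]) (z : E2) :
    ∃ x y : ℂ, z = x • v + y • w := by
  have hcard : Fintype.card (Fin 2) = Module.finrank ℂ E2 := by
    simp [Module.finrank_prod]
  let B := basisOfLinearIndependentOfCardEqFinrank hvw hcard
  have hB : ∀ i, B i = ![v, w] i := fun i => by
    rw [coe_basisOfLinearIndependentOfCardEqFinrank]
  refine ⟨B.repr z 0, B.repr z 1, ?_⟩
  have hz := B.sum_repr z
  rw [Fin.sum_univ_two] at hz
  have hz2 : z = (B.repr z) 0 • B 0 + (B.repr z) 1 • B 1 := hz.symm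
  rw [hB 0, hB 1] at hz2
  simpa using hz2

lemma key_identity
    {F : E2 → E2} (hFa : AnalyticAt ℂ F 0) (hF0 : F 0 = 0)
    {f Q : E2 → ℂ} {pf pq : FormalMultilinearSeries ℂ E2 ℂ}
    (hfs : HasFPowerSeriesAt f pf 0) (hqs : HasFPowerSeriesAt Q pq 0)
    {m n : ℕ}
    (hm : ∀ k < m, ∀ z : E2, dg pf k z = 0)
    (hn : ∀ k < n, ∀ z : E2, dg pq k z = 0)
    (hrel : (fun z => f (F z) * Q z) =ᶠ[𝓝 (0:E2)] fun z => f z * Q (F z)) (z : E2) :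
    dg pf m (fderiv ℂ F 0 z) * dg pq n z = dg pf m z * dg pq n (fderiv ℂ F 0 z) := by
  have hline : AnalyticAt ℂ (fun t : ℂ => t • z) 0 := analyticAt_id.smul analyticAt_const
  have hline0 : (fun t : ℂ => t • z) 0 = 0 := by simp
  have hlined : HasDerivAt (fun t : ℂ => t • z) z 0 := by
    simpa using (hasDerivAt_id (0:ℂ)).smul_const z
  have hFa' : AnalyticAt ℂ F ((fun t : ℂ => t • z) 0) := by rw [hline0]; exact hFa
  have hγ : AnalyticAt ℂ (fun t : ℂ => F (t • z)) 0 := AnalyticAt.comp (f := fun t : ℂ => t • z) hFa' hline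
  have hγ0 : (fun t : ℂ => F (t • z)) 0 = 0 := by simp [hF0]
  have hFd : HasFDerivAt F (fderiv ℂ F 0) ((fun t : ℂ => t • z) 0) := by
    rw [hline0]; exact hFa.differentiableAt.hasFDerivAt
  have hγd : HasDerivAt (fun t : ℂ => F (t • z)) (fderiv ℂ F 0 z) 0 :=
    hFd.comp_hasDerivAt 0 hlined
  have H1 : HOC (fun t => f (F (t • z))) m (dg pf m (fderiv ℂ F 0 z)) := by
    have h := mainE hfs hm hγ hγ0
    rwa [hγd.deriv] at h
  have H2 : HOC (fun t => Q (t • z)) n (dg pq n z) := by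
    have h := mainE hqs hn hline hline0
    rwa [hlined.deriv] at h
  have H3 : HOC (fun t => f (t • z)) m (dg pf m z) := by
    have h := mainE hfs hm hline hline0
    rwa [hlined.deriv] at h
  have H4 : HOC (fun t => Q (F (t • z))) n (dg pq n (fderiv ℂ F 0 z)) := by
    have h := mainE hqs hn hγ hγ0
    rwa [hγd.deriv] at h
  have ht : Tendsto (fun t : ℂ => t • z) (𝓝 (0:ℂ)) (𝓝 (0:E2)) := by
    have := hline.continuousAt.tendsto
    simpa using this
  have hev : ∀ᶠ t in 𝓝 (0:ℂ), f (F (t • z)) * Q (t • z) = f (t • z) * Q (F (t • z)) :=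
    ht.eventually hrel
  exact (H1.mul H2).unique ((H3.mul H4).congr hev)

noncomputable def pol (m : ℕ) (c : ℕ → ℂ) : Polynomial ℂ :=
  ∑ i ∈ Finset.range (m+1), Polynomial.monomial i (c i)

lemma pol_coeff (m : ℕ) (c : ℕ → ℂ) (j : ℕ) :
    (pol m c).coeff j = if j ≤ m then c j else 0 := by
  classical
  unfold pol
  rw [Polynomial.finset_sum_coeff]
  simp only [Polynomial.coeff_monomial]
  rw [Finset.sum_ite_eq' (Finset.range (m+1)) j c]
  simp [Nat.lt_succ_iff]

lemma pol_eval (m : ℕ) (c : ℕ → ℂ) (x : ℂ) :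
    (pol m c).eval x = ∑ i ∈ Finset.range (m+1), c i * x ^ i := by
  unfold pol
  rw [Polynomial.eval_finset_sum]
  simp [Polynomial.eval_monomial]

lemma coeff_extract {m n I K : ℕ} (a b e f : ℕ → ℂ)
    (hIm : I ≤ m) (hKn : K ≤ n) (haI : a I ≠ 0) (hbK : b K ≠ 0)
    (hamax : ∀ i, I < i → i ≤ m → a i = 0) (hbmax : ∀ k, K < k → k ≤ n → b k = 0)
    (hid : (pol m fun i => a i * e i) * pol n b = pol m a * (pol n fun k => b k * f k)) :
    e I = f K := by
  classical
  have h := congrArg (fun p : Polynomial ℂ => p.coeff (I + K)) hid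
  simp only [Polynomial.coeff_mul] at h
  rw [Finset.sum_eq_single (I, K), Finset.sum_eq_single (I, K)] at h
  · simp only [pol_coeff, if_pos hIm, if_pos hKn] at h
    have h2 : a I * e I = a I * f K := by
      apply mul_right_cancel₀ hbK
      rw [h]; ring
    exact mul_left_cancel₀ haI h2
  · rintro ⟨i, k⟩ hmem hne
    have hik : i + k = I + K := Finset.HasAntidiagonal.mem_antidiagonal.mp hmem
    rcases lt_trichotomy i I with hlt | heq | hgt
    · have hkK : K < k := by omega
      apply mul_eq_zero_of_right
      simp only [pol_coeff]
      split_ifs with h1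
      · simp [hbmax k hkK h1]
      · rfl
    · exfalso; apply hne
      have hk : k = K := by omega
      simp [heq, hk]
    · apply mul_eq_zero_of_left
      simp only [pol_coeff]
      split_ifs with h1
      · simp [hamax i hgt h1]
      · rfl
  · intro hnot
    exact absurd (Finset.HasAntidiagonal.mem_antidiagonal.mpr (by simp)) hnot
  · rintro ⟨i, k⟩ hmem hne
    have hik : i + k = I + K := Finset.HasAntidiagonal.mem_antidiagonal.mp hmem
    rcases lt_trichotomy i I with hlt | heq | hgt
    · have hkK : K < k := by omega
      apply mul_eq_zero_of_right
      simp only [pol_coeff]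
      split_ifs with h1
      · simp [hbmax k hkK h1]
      · rfl
    · exfalso; apply hne
      have hk : k = K := by omega
      simp [heq, hk]
    · apply mul_eq_zero_of_left
      simp only [pol_coeff]
      split_ifs with h1
      · simp [hamax i hgt h1]
      · rfl
  · intro hnot
    exact absurd (Finset.HasAntidiagonal.mem_antidiagonal.mpr (by simp)) hnot

lemma res_step {lam mu : ℂ} (hlam : lam ≠ 0) (hmu : mu ≠ 0)
    (hres : ∀ p q : ℤ, lam ^ p * mu ^ q = 1 → p = 0 ∧ q = 0)
    {m n I K : ℕ} (hIm : I ≤ m) (hKn : K ≤ n)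
    (h : lam ^ I * mu ^ (m - I) = lam ^ K * mu ^ (n - K)) :
    I = K ∧ m = n := by
  have hz : lam ^ ((I:ℤ) - K) * mu ^ (((m - I : ℕ) : ℤ) - ((n - K : ℕ) : ℤ)) = 1 := by
    rw [zpow_sub₀ hlam, zpow_sub₀ hmu, zpow_natCast, zpow_natCast, zpow_natCast, zpow_natCast]
    rw [div_mul_div_comm, h, div_self]
    exact mul_ne_zero (pow_ne_zero _ hlam) (pow_ne_zero _ hmu)
  obtain ⟨h1, h2⟩ := hres _ _ hz
  omega

lemma alg_main {lam mu : ℂ} (hlam : lam ≠ 0) (hmu : mu ≠ 0)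
    (hres : ∀ p q : ℤ, lam ^ p * mu ^ q = 1 → p = 0 ∧ q = 0)
    {m n : ℕ} {a b : ℕ → ℂ}
    (ha : ∃ i, i ≤ m ∧ a i ≠ 0) (hb : ∃ k, k ≤ n ∧ b k ≠ 0)
    (hid : (pol m fun i => a i * (lam ^ i * mu ^ (m - i))) * pol n b
         = pol m a * (pol n fun k => b k * (lam ^ k * mu ^ (n - k)))) :
    m = n ∧ ∃ c : ℂ, ∀ i ≤ m, a i = c * b i := by
  classical
  obtain ⟨i0, hi0m, hi0⟩ := ha
  obtain ⟨k0, hk0n, hk0⟩ := hb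
  set I := Nat.findGreatest (fun i => a i ≠ 0) m with hIdef
  set K := Nat.findGreatest (fun k => b k ≠ 0) n with hKdef
  have haI : a I ≠ 0 := Nat.findGreatest_spec (P := fun i => a i ≠ 0) hi0m hi0
  have hbK : b K ≠ 0 := Nat.findGreatest_spec (P := fun k => b k ≠ 0) hk0n hk0
  have hIm : I ≤ m := Nat.findGreatest_le _
  have hKn : K ≤ n := Nat.findGreatest_le _
  have hamax : ∀ i, I < i → i ≤ m → a i = 0 := by
    intro i h1 h2
    by_contra h3
    exact absurd (Nat.le_findGreatest (P := fun i => a i ≠ 0) h2 h3) (by omega)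
  have hbmax : ∀ k, K < k → k ≤ n → b k = 0 := by
    intro k h1 h2
    by_contra h3
    exact absurd (Nat.le_findGreatest (P := fun k => b k ≠ 0) h2 h3) (by omega)
  have heIK := coeff_extract a b _ _ hIm hKn haI hbK hamax hbmax hid
  obtain ⟨hIK, hmn⟩ := res_step hlam hmu hres hIm hKn heIK
  subst hmn
  refine ⟨rfl, a I / b K, ?_⟩
  by_contra hcon
  push_neg at hcon
  obtain ⟨i1, hi1m, hi1⟩ := hcon
  set c : ℂ := a I / b K with hcdef
  set a' : ℕ → ℂ := fun i => a i - c * b i with ha'def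
  have e1 : (pol m fun i => a' i * (lam ^ i * mu ^ (m - i)))
      = (pol m fun i => a i * (lam ^ i * mu ^ (m - i)))
        - Polynomial.C c * (pol m fun i => b i * (lam ^ i * mu ^ (m - i))) := by
    apply Polynomial.ext
    intro j
    simp only [Polynomial.coeff_sub, Polynomial.coeff_C_mul, pol_coeff]
    by_cases hj : j ≤ m
    · simp only [if_pos hj, ha'def]; ring
    · simp [if_neg hj]
  have e2 : pol m a' = pol m a - Polynomial.C c * pol m b := by
    apply Polynomial.ext
    intro j
    simp only [Polynomial.coeff_sub, Polynomial.coeff_C_mul, pol_coeff]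
    by_cases hj : j ≤ m
    · simp only [if_pos hj, ha'def]
    · simp [if_neg hj]
  have hid' : (pol m fun i => a' i * (lam ^ i * mu ^ (m - i))) * pol m b
      = pol m a' * (pol m fun k => b k * (lam ^ k * mu ^ (m - k))) := by
    rw [e1, e2]
    linear_combination hid
  have ha'ne : ∃ i, i ≤ m ∧ a' i ≠ 0 := ⟨i1, hi1m, sub_ne_zero.mpr hi1⟩
  obtain ⟨i2, hi2m, hi2⟩ := ha'ne
  set I' := Nat.findGreatest (fun i => a' i ≠ 0) m with hI'def
  have haI' : a' I' ≠ 0 := Nat.findGreatest_spec (P := fun i => a' i ≠ 0) hi2m hi2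
  have hI'm : I' ≤ m := Nat.findGreatest_le _
  have ha'max : ∀ i, I' < i → i ≤ m → a' i = 0 := by
    intro i h1 h2
    by_contra h3
    exact absurd (Nat.le_findGreatest (P := fun i => a' i ≠ 0) h2 h3) (by omega)
  have heI' := coeff_extract a' b _ _ hI'm hKn haI' hbK ha'max hbmax hid'
  obtain ⟨hI'K, -⟩ := res_step hlam hmu hres hI'm hKn heI'
  apply haI'
  rw [hI'K, ← hIK, ha'def]
  simp only
  rw [hcdef, hIK]
  field_simp
  ring

lemma taylor_zero {f : E2 → ℂ} {p : FormalMultilinearSeries ℂ E2 ℂ}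
    (hfs : HasFPowerSeriesAt f p 0) (hall : ∀ n z, dg p n z = 0) :
    f =ᶠ[𝓝 (0:E2)] 0 := by
  obtain ⟨r, hb⟩ := hfs
  have hball : EMetric.ball (0:E2) r ∈ 𝓝 (0:E2) := EMetric.ball_mem_nhds 0 hb.r_pos
  filter_upwards [hball] with y hy
  have hsum := hb.hasSum hy
  have hz : (fun n : ℕ => p n fun _ => y) = fun _ => (0:ℂ) := by
    funext k
    exact hall k y
  rw [hz] at hsum
  have := hasSum_zero (α := ℂ) |>.unique hsum
  simpa using this.symm

lemma mcoeff_exists {p : FormalMultilinearSeries ℂ E2 ℂ} {n : ℕ} {v w : E2}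
    (hvw : LinearIndependent ℂ ![v, w]) (hz : ∃ z, dg p n z ≠ 0) :
    ∃ i, i ≤ n ∧ mcoeff p n i v w ≠ 0 := by
  by_contra h
  push_neg at h
  obtain ⟨z, hz'⟩ := hz
  obtain ⟨x, y, hxy⟩ := span_vw hvw z
  apply hz'
  rw [hxy, mlin_expand]
  apply Finset.sum_eq_zero
  intro i hi
  rw [h i (Finset.mem_range_succ_iff.mp hi), zero_mul]

lemma hasFPowerSeriesAt_const_mul {Q : E2 → ℂ} {pq : FormalMultilinearSeries ℂ E2 ℂ} {c : ℂ}
    (hqs : HasFPowerSeriesAt Q pq 0) :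
    HasFPowerSeriesAt (fun z => c * Q z) (c • pq) 0 := by
  obtain ⟨r, hb⟩ := hqs
  refine ⟨r, ?_, hb.r_pos, ?_⟩
  · refine ENNReal.le_of_forall_nnreal_lt (fun s hs => ?_)
    have hs' : (s : ℝ≥0∞) < pq.radius := lt_of_lt_of_le hs hb.r_le
    obtain ⟨C, hC0, hC⟩ := pq.norm_mul_pow_le_of_lt_radius hs'
    refine FormalMultilinearSeries.le_radius_of_bound _ (‖c‖ * C) (fun n => ?_)
    have hn : ‖(c • pq) n‖ ≤ ‖c‖ * ‖pq n‖ := norm_smul_le c (pq n)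
    calc ‖(c • pq) n‖ * (s:ℝ) ^ n ≤ ‖c‖ * ‖pq n‖ * (s:ℝ) ^ n :=
          mul_le_mul_of_nonneg_right hn (by positivity)
    _ = ‖c‖ * (‖pq n‖ * (s:ℝ) ^ n) := by ring
    _ ≤ ‖c‖ * C := mul_le_mul_of_nonneg_left (hC n) (norm_nonneg c)
  · intro y hy
    have h2 := (hb.hasSum hy).mul_left c
    have h3 : (fun n : ℕ => c * (pq n fun _ => y)) = fun n : ℕ => (c • pq) n fun _ => y := by
      funext k
      show c * (pq k fun _ => y) = (c • pq k) fun _ => y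
      rw [ContinuousMultilinearMap.smul_apply, smul_eq_mul]
    rwa [h3] at h2

lemma dg_sub_smul (p q : FormalMultilinearSeries ℂ E2 ℂ) (c : ℂ) (k : ℕ) (z : E2) :
    dg (p - c • q) k z = dg p k z - c * dg q k z := by
  unfold dg
  show (p k - c • q k) (fun _ => z) = _
  rw [ContinuousMultilinearMap.sub_apply, ContinuousMultilinearMap.smul_apply, smul_eq_mul]

lemma mcoeff_sub_smul (p q : FormalMultilinearSeries ℂ E2 ℂ) (c : ℂ) (n i : ℕ) (v w : E2) :
    mcoeff (p - c • q) n i v w = mcoeff p n i v w - c * mcoeff q n i v w := by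
  unfold mcoeff
  rw [Finset.mul_sum, ← Finset.sum_sub_distrib]
  apply Finset.sum_congr rfl
  intro S _
  show (p n - c • q n) _ = _
  rw [ContinuousMultilinearMap.sub_apply, ContinuousMultilinearMap.smul_apply, smul_eq_mul]

lemma build_polyid {F : E2 → E2} (hFa : AnalyticAt ℂ F 0) (hF0 : F 0 = 0)
    {v w : E2} (hvw : LinearIndependent ℂ ![v, w]) {lam mu : ℂ}
    (hv : fderiv ℂ F 0 v = lam • v) (hw : fderiv ℂ F 0 w = mu • w)
    {f Q : E2 → ℂ} {pf pq : FormalMultilinearSeries ℂ E2 ℂ}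
    (hfs : HasFPowerSeriesAt f pf 0) (hqs : HasFPowerSeriesAt Q pq 0)
    {m n : ℕ} (hm : ∀ k < m, ∀ z : E2, dg pf k z = 0) (hn : ∀ k < n, ∀ z : E2, dg pq k z = 0)
    (hrel : (fun z => f (F z) * Q z) =ᶠ[𝓝 (0:E2)] fun z => f z * Q (F z)) :
    (pol m fun i => mcoeff pf m i v w * (lam ^ i * mu ^ (m - i)))
        * pol n (fun k => mcoeff pq n k v w)
      = pol m (fun i => mcoeff pf m i v w)
        * (pol n fun k => mcoeff pq n k v w * (lam ^ k * mu ^ (n - k))) := by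
  apply Polynomial.funext
  intro x
  have hkey := key_identity hFa hF0 hfs hqs hm hn hrel (x • v + (1:ℂ) • w)
  have hL : fderiv ℂ F 0 (x • v + (1:ℂ) • w) = (lam * x) • v + (mu * 1) • w := by
    rw [map_add, map_smul, map_smul, hv, hw]
    module
  rw [hL] at hkey
  have eP : ∀ (p : FormalMultilinearSeries ℂ E2 ℂ) (N : ℕ),
      dg p N ((lam * x) • v + (mu * 1) • w)
        = ∑ i ∈ Finset.range (N+1), mcoeff p N i v w * (lam ^ i * mu ^ (N - i)) * x ^ i := by
    intro p N
    rw [mlin_expand]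
    apply Finset.sum_congr rfl
    intro i _
    ring
  have eX : ∀ (p : FormalMultilinearSeries ℂ E2 ℂ) (N : ℕ),
      dg p N (x • v + (1:ℂ) • w)
        = ∑ i ∈ Finset.range (N+1), mcoeff p N i v w * x ^ i := by
    intro p N
    rw [mlin_expand]
    apply Finset.sum_congr rfl
    intro i _
    rw [one_pow, mul_one]
  rw [eP, eX, eX, eP] at hkey
  rw [Polynomial.eval_mul, Polynomial.eval_mul, pol_eval, pol_eval, pol_eval, pol_eval]
  exact hkey

lemma nat_find_pack {p : ℕ → Prop} (h : ∃ n, p n) : ∃ n, p n ∧ ∀ k < n, ¬ p k := by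
  classical
  exact ⟨Nat.find h, Nat.find_spec h, fun k hk => Nat.find_min h hk⟩

end MFIR

open MFIR in
/-- Theorem 1 (i) of the paper: if an analytic map of `ℂ²` fixing the origin, whose
differential at the origin is diagonalizable with eigenvalues `λ, μ` with `λμ ≠ 0`,
admits a meromorphic first integral `P/Q` near the origin, then the eigenvalues are
resonant: `λ^p μ^q = 1` for some `(p,q) ≠ (0,0)` in `ℤ²`. -/
theorem meromorphic_first_integral_resonant
    (U : Set (ℂ × ℂ)) (hUopen : IsOpen U) (hUconn : IsConnected U)
    (hU0 : ((0 : ℂ), (0 : ℂ)) ∈ U)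
    (F : ℂ × ℂ → ℂ × ℂ) (hFanal : AnalyticOn ℂ F U)
    (hF0 : F (0, 0) = (0, 0))
    (lam mu : ℂ) (v w : ℂ × ℂ)
    (hvw : LinearIndependent ℂ ![v, w])
    (hv : fderiv ℂ F (0, 0) v = lam • v)
    (hw : fderiv ℂ F (0, 0) w = mu • w)
    (hlammu : lam * mu ≠ 0)
    (P Q : ℂ × ℂ → ℂ)
    (hP : AnalyticOn ℂ P U) (hQ : AnalyticOn ℂ Q U)
    (hcoprime : ∀ z ∈ U, P z = 0 → Q z = 0 →
      ∀ᶠ y in 𝓝[≠] z, ¬ (y ∈ U ∧ P y = 0 ∧ Q y = 0))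
    (hQne : ∃ z ∈ U, Q z ≠ 0)
    (hnonconst : ¬ ∃ c : ℂ, ∀ z ∈ U, P z = c * Q z)
    (hfirstint : ∀ z ∈ U, F z ∈ U → P (F z) * Q z = P z * Q (F z)) :
    ∃ p q : ℤ, (p, q) ≠ ((0 : ℤ), (0 : ℤ)) ∧ lam ^ p * mu ^ q = 1 := by
  classical
  by_contra hcon
  push_neg at hcon
  have hres : ∀ p q : ℤ, lam ^ p * mu ^ q = 1 → p = 0 ∧ q = 0 := by
    intro p q h
    by_contra h2
    exact hcon p q (fun hpq => h2 (by rwa [Prod.mk.injEq] at hpq)) h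
  have hlam : lam ≠ 0 := fun h => hlammu (by rw [h, zero_mul])
  have hmu : mu ≠ 0 := fun h => hlammu (by rw [h, mul_zero])
  have hU0' : (0 : E2) ∈ U := hU0
  have hFnhd := hUopen.analyticOn_iff_analyticOnNhd.mp hFanal
  have hPnhd := hUopen.analyticOn_iff_analyticOnNhd.mp hP
  have hQnhd := hUopen.analyticOn_iff_analyticOnNhd.mp hQ
  have hFa : AnalyticAt ℂ F 0 := hFnhd _ hU0'
  have hF0' : F (0:E2) = 0 := hF0
  obtain ⟨pP, hPs⟩ := hPnhd _ hU0'
  obtain ⟨pQ, hQs⟩ := hQnhd _ hU0'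
  have hv' : fderiv ℂ F (0:E2) v = lam • v := hv
  have hw' : fderiv ℂ F (0:E2) w = mu • w := hw
  have hFU0 : F (0:E2) ∈ U := by rw [hF0']; exact hU0'
  have hrel : (fun z => P (F z) * Q z) =ᶠ[𝓝 (0:E2)] fun z => P z * Q (F z) := by
    filter_upwards [hUopen.eventually_mem hU0',
      hFa.continuousAt.eventually (hUopen.eventually_mem hFU0)] with z h1 h2
    exact hfirstint z h1 h2
  -- Taylor series of Q and P are nonzero
  have hQtay : ∃ N : ℕ, ∃ z : E2, dg pQ N z ≠ 0 := by
    by_contra h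
    push_neg at h
    have hev := taylor_zero hQs h
    have heq := hQnhd.eqOn_zero_of_preconnected_of_eventuallyEq_zero
      hUconn.isPreconnected hU0' hev
    obtain ⟨z0, hz0U, hz0⟩ := hQne
    exact hz0 (heq hz0U)
  have hPtay : ∃ N : ℕ, ∃ z : E2, dg pP N z ≠ 0 := by
    by_contra h
    push_neg at h
    have hev := taylor_zero hPs h
    have heq := hPnhd.eqOn_zero_of_preconnected_of_eventuallyEq_zero
      hUconn.isPreconnected hU0' hev
    exact hnonconst ⟨0, fun z hz => by rw [heq hz]; simp⟩
  obtain ⟨m, hmspec, hmmin'⟩ := nat_find_pack hPtay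
  obtain ⟨n, hnspec, hnmin'⟩ := nat_find_pack hQtay
  have hmmin : ∀ k < m, ∀ z, dg pP k z = 0 := by
    intro k hk z
    have := hmmin' k hk
    push_neg at this
    exact this z
  have hnmin : ∀ k < n, ∀ z, dg pQ k z = 0 := by
    intro k hk z
    have := hnmin' k hk
    push_neg at this
    exact this z
  -- stage 1
  have hid1 := build_polyid hFa hF0' hvw hv' hw' hPs hQs hmmin hnmin hrel
  have ha1 := mcoeff_exists (v := v) (w := w) hvw hmspec
  have hb1 := mcoeff_exists (v := v) (w := w) hvw hnspec
  obtain ⟨hmn, c, hc⟩ := alg_main hlam hmu hres ha1 hb1 hid1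
  subst hmn
  -- stage 2
  set P1 : E2 → ℂ := fun z => P z - c * Q z with hP1def
  have hP1s : HasFPowerSeriesAt P1 (pP - c • pQ) 0 :=
    hPs.sub (hasFPowerSeriesAt_const_mul hQs)
  have hP1nhd : AnalyticOnNhd ℂ P1 U := hPnhd.sub (analyticOnNhd_const.mul hQnhd)
  have hP1tay : ∃ N : ℕ, ∃ z : E2, dg (pP - c • pQ) N z ≠ 0 := by
    by_contra h
    push_neg at h
    have hev := taylor_zero hP1s h
    have heq := hP1nhd.eqOn_zero_of_preconnected_of_eventuallyEq_zero
      hUconn.isPreconnected hU0' hev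
    refine hnonconst ⟨c, fun z hz => ?_⟩
    have h2 := heq hz
    simp only [hP1def, Pi.zero_apply] at h2
    exact sub_eq_zero.mp h2
  obtain ⟨m1, hm1spec, hm1min'⟩ := nat_find_pack hP1tay
  have hm1min : ∀ k < m1, ∀ z, dg (pP - c • pQ) k z = 0 := by
    intro k hk z
    have := hm1min' k hk
    push_neg at this
    exact this z
  -- m1 > m
  have hm1n : m < m1 := by
    rcases lt_or_ge m m1 with h | h
    · exact h
    · exfalso
      obtain ⟨z, hz⟩ := hm1spec
      apply hz
      rw [dg_sub_smul]
      rcases lt_or_eq_of_le h with h2 | h2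
      · rw [hmmin m1 h2 z, hnmin m1 h2 z, mul_zero, sub_zero]
      · obtain ⟨x, y, hxy⟩ := span_vw hvw z
        rw [hxy, h2, mlin_expand, mlin_expand, Finset.mul_sum,
          ← Finset.sum_sub_distrib]
        apply Finset.sum_eq_zero
        intro i hi
        rw [hc i (Finset.mem_range_succ_iff.mp hi)]
        ring
  -- relation for P1
  have hrel1 : (fun z => P1 (F z) * Q z) =ᶠ[𝓝 (0:E2)] fun z => P1 z * Q (F z) := by
    filter_upwards [hrel] with z h
    simp only [hP1def]
    linear_combination h
  have hid2 := build_polyid hFa hF0' hvw hv' hw' hP1s hQs hm1min hnmin hrel1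
  have ha2 := mcoeff_exists (v := v) (w := w) hvw hm1spec
  obtain ⟨hm1eq, -⟩ := alg_main hlam hmu hres ha2 hb1 hid2
  omega
end

section
/- Let a, b, c, d, e, f be positive real numbers and define V_{f,e,d,c,b,a}(x,y) = (af + (a+bf)x + (f+ae)y + bx² + ey² + cx²y + dxy²)/(xy) for x, y > 0. Then V_{f,e,d,c,b,a} is a first integral of the composition map F_{f,e,d,c,b,a} = F_f ∘ F_e ∘ F_d ∘ F_c ∘ F_b ∘ F_a on Q⁺: for every (x,y) ∈ Q⁺, V_{f,e,d,c,b,a}(F_{f,e,d,c,b,a}(x,y)) = V_{f,e,d,c,b,a}(x,y). -/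
/-- The Lyness map `F_a(x,y) = (y, (a+y)/x)`. -/
noncomputable def lyness (a : ℝ) (p : ℝ × ℝ) : ℝ × ℝ := (p.2, (a + p.2) / p.1)

/-- The rational function `V_{f,e,d,c,b,a}(x,y)` of Corollary 3 of the paper. -/
noncomputable def lynessV (a b c d e f x y : ℝ) : ℝ :=
  (a * f + (a + b * f) * x + (f + a * e) * y + b * x ^ 2 + e * y ^ 2 +
      c * x ^ 2 * y + d * x * y ^ 2) / (x * y)

private lemma lyness_pos {a : ℝ} (ha : 0 < a) {p : ℝ × ℝ} (h1 : 0 < p.1) (h2 : 0 < p.2) :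
    0 < (lyness a p).1 ∧ 0 < (lyness a p).2 :=
  ⟨h2, div_pos (by linarith) h1⟩

private lemma lynessV_step (a b c d e f : ℝ) (p : ℝ × ℝ) (ha : 0 < a)
    (h1 : 0 < p.1) (h2 : 0 < p.2) :
    lynessV b c d e f a (lyness a p).1 (lyness a p).2 =
      lynessV a b c d e f p.1 p.2 := by
  obtain ⟨x, y⟩ := p
  simp only at h1 h2
  have hay : a + y ≠ 0 := by positivity
  simp only [lyness, lynessV]
  rw [div_eq_div_iff (by positivity) (by positivity)]
  field_simp
  ring

/-- Corollary 3 (ii) of the paper (case `k = 6`): `V_{f,e,d,c,b,a}` is a first integral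
of the composition map `F_{f,e,d,c,b,a} = F_f ∘ F_e ∘ F_d ∘ F_c ∘ F_b ∘ F_a` on the open
first quadrant. -/
theorem lynessV_first_integral (a b c d e f : ℝ)
    (ha : 0 < a) (hb : 0 < b) (hc : 0 < c) (hd : 0 < d) (he : 0 < e) (hf : 0 < f) :
    ∀ x y : ℝ, 0 < x → 0 < y →
      lynessV a b c d e f
        ((lyness f ∘ lyness e ∘ lyness d ∘ lyness c ∘ lyness b ∘ lyness a) (x, y)).1
        ((lyness f ∘ lyness e ∘ lyness d ∘ lyness c ∘ lyness b ∘ lyness a) (x, y)).2 =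
      lynessV a b c d e f x y := by
  intro x y hx hy
  have h0 : (0:ℝ) < ((x, y) : ℝ × ℝ).1 ∧ (0:ℝ) < ((x, y) : ℝ × ℝ).2 := ⟨hx, hy⟩
  have h1 := lyness_pos ha h0.1 h0.2
  have h2 := lyness_pos hb h1.1 h1.2
  have h3 := lyness_pos hc h2.1 h2.2
  have h4 := lyness_pos hd h3.1 h3.2
  have h5 := lyness_pos he h4.1 h4.2
  simp only [Function.comp_apply]
  rw [lynessV_step f a b c d e _ hf h5.1 h5.2,
    lynessV_step e f a b c d _ he h4.1 h4.2,
    lynessV_step d e f a b c _ hd h3.1 h3.2,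
    lynessV_step c d e f a b _ hc h2.1 h2.2,
    lynessV_step b c d e f a _ hb h1.1 h1.2,
    lynessV_step a b c d e f _ ha h0.1 h0.2]
end

section
/- Let a_1, a_2, a_3, a_4, a_5 be positive real numbers with a_i ≠ 1 for every i and min{a_1,...,a_5} < 1 < max{a_1,...,a_5}, extended to a 5-periodic sequence (a_n). Then there exists a nonempty open set U ⊆ Q⁺ such that for every initial condition (x_1, x_2) ∈ U, the solution of the recurrence x_{n+2} = (a_n + x_{n+1})/x_n satisfies liminf_{n→∞} x_n = 0 and limsup_{n→∞} x_n = +∞ (i.e., for every ε > 0 there are infinitely many n with x_n < ε, and for every M there are infinitely many n with x_n > M). In particular the recurrence is not persistent. -/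
namespace LynessAux

/-- Iterated Lyness pair map: `F a p n = (x (n+1), x (n+2))` for the orbit starting at `p`. -/
noncomputable def F (a : ℕ → ℝ) (p : ℝ × ℝ) : ℕ → ℝ × ℝ
  | 0 => p
  | n+1 => ((F a p n).2, (a (n+1) + (F a p n).2) / (F a p n).1)

lemma F_pos (a : ℕ → ℝ) (hapos : ∀ n, 1 ≤ n → 0 < a n) (p : ℝ × ℝ)
    (hp1 : 0 < p.1) (hp2 : 0 < p.2) : ∀ n, 0 < (F a p n).1 ∧ 0 < (F a p n).2 := by
  intro n
  induction n with
  | zero => exact ⟨hp1, hp2⟩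
  | succ n ih =>
    have ha := hapos (n+1) (by omega)
    exact ⟨ih.2, div_pos (by linarith [ih.2]) ih.1⟩

lemma F_contAt (a : ℕ → ℝ) (hapos : ∀ n, 1 ≤ n → 0 < a n) (p : ℝ × ℝ)
    (hp1 : 0 < p.1) (hp2 : 0 < p.2) : ∀ n, ContinuousAt (fun q => F a q n) p := by
  intro n
  induction n with
  | zero => exact continuousAt_id
  | succ n ih =>
    have hpos := F_pos a hapos p hp1 hp2 n
    show ContinuousAt (fun q => ((F a q n).2, (a (n+1) + (F a q n).2) / (F a q n).1)) p
    exact (ih.snd).prodMk (((continuousAt_const.add ih.snd).div ih.fst (ne_of_gt hpos.1)))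

lemma F_surj (a : ℕ → ℝ) (hapos : ∀ n, 1 ≤ n → 0 < a n) :
    ∀ s (q : ℝ × ℝ), 0 < q.1 → 0 < q.2 → ∃ p : ℝ × ℝ, 0 < p.1 ∧ 0 < p.2 ∧ F a p s = q := by
  intro s
  induction s with
  | zero => exact fun q h1 h2 => ⟨q, h1, h2, rfl⟩
  | succ s ih =>
    intro q h1 h2
    have ha := hapos (s+1) (by omega)
    obtain ⟨p, hp1, hp2, hFp⟩ := ih ((a (s+1) + q.1)/q.2, q.1)
      (div_pos (by linarith) h2) h1
    refine ⟨p, hp1, hp2, ?_⟩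
    show ((F a p s).2, (a (s+1) + (F a p s).2) / (F a p s).1) = q
    rw [hFp]
    have h0 : (a (s+1) + q.1) ≠ 0 := by positivity
    have : (a (s+1) + q.1) / ((a (s+1) + q.1)/q.2) = q.2 := by
      field_simp
    simp only [this]

lemma F_orbit (a : ℕ → ℝ) (p : ℝ × ℝ) (x : ℕ → ℝ) (hx1 : x 1 = p.1) (hx2 : x 2 = p.2)
    (hrec : ∀ n, 1 ≤ n → x (n + 2) = (a n + x (n + 1)) / x n) :
    ∀ n, F a p n = (x (n+1), x (n+2)) := by
  intro n
  induction n with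
  | zero => simp [F]; exact Prod.ext hx1.symm hx2.symm
  | succ n ih =>
    show ((F a p n).2, (a (n+1) + (F a p n).2) / (F a p n).1) = _
    rw [ih]
    simp only []
    rw [← hrec (n+1) (by omega)]


/-- Choice of the smallness/largeness thresholds `D`, `T` for the invariant region. -/
lemma exists_consts (b1 b2 b3 b4 b5 : ℝ) (h1 : 0 < b1) (h2 : 0 < b2) (h3 : 0 < b3)
    (h4 : 0 < b4) (h5 : 0 < b5) (hlt : b1 < 1) (hgt : 1 < b2) :
    ∃ D T : ℝ, 0 < D ∧ D ≤ 1 ∧ b1 + D < 1 ∧ b1 + 1 ≤ T ∧ 1 ≤ T ∧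
      (b1 + D) * ((b5 + b4*D/b2)/T + (b3*D + b2 + (b1+D)/T)/(b1*b2)) ≤ b2 := by
  set m : ℝ := min 1 ((b2-1)/(b2*(b2+5))) with hm
  have hm0 : 0 < m := by
    apply lt_min one_pos
    apply div_pos (by linarith) (by nlinarith)
  have hm1 : m ≤ 1 := min_le_left _ _
  have hmB : m * (b2*(b2+5)) ≤ b2 - 1 := by
    have hden : 0 < b2*(b2+5) := by nlinarith
    have h' : m ≤ (b2-1)/(b2*(b2+5)) := min_le_right _ _
    calc m * (b2*(b2+5)) ≤ ((b2-1)/(b2*(b2+5))) * (b2*(b2+5)) :=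
          mul_le_mul_of_nonneg_right h' hden.le
      _ = b2 - 1 := by field_simp
  set D : ℝ := min (min (b1*m) ((1-b1)/2)) (m/(b3+1)) with hD
  have hD0 : 0 < D := by
    apply lt_min (lt_min (by positivity) (by linarith))
    positivity
  have hDm : D ≤ b1 * m := le_trans (min_le_left _ _) (min_le_left _ _)
  have hDhalf : D ≤ (1-b1)/2 := le_trans (min_le_left _ _) (min_le_right _ _)
  have hD3 : b3 * D ≤ m := by
    have h' : D ≤ m/(b3+1) := min_le_right _ _
    calc b3 * D ≤ b3 * (m/(b3+1)) := by
          exact mul_le_mul_of_nonneg_left h' (le_of_lt h3)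
      _ ≤ m := by
          rw [mul_div_assoc']
          rw [div_le_iff₀ (by linarith)]
          nlinarith
  have hD1 : D ≤ 1 := by nlinarith
  have hDb1 : b1 + D < 1 := by linarith [hDhalf]
  set T : ℝ := max (b1+1) (max ((b1+1)/m) ((b1+1)*(b5 + b4/b2)/(m*b2))) with hT
  have hT0 : 0 < T := lt_of_lt_of_le (by linarith) (le_max_left _ _)
  have hTb : b1 + 1 ≤ T := le_max_left _ _
  have hT1 : 1 ≤ T := by linarith
  -- fact: (b1+D)/T ≤ m
  have hcm : (b1 + D)/T ≤ m := by
    have h' : (b1+1)/m ≤ T := le_trans (le_max_left _ _) (le_max_right _ _)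
    rw [div_le_iff₀ hT0]
    calc b1 + D ≤ b1 + 1 := by linarith
      _ = ((b1+1)/m) * m := by field_simp
      _ ≤ T * m := mul_le_mul_of_nonneg_right h' (le_of_lt hm0)
      _ = m * T := mul_comm _ _
  -- fact: (b1+D)*(b5 + b4*D/b2)/T ≤ m*b2
  have hAm : (b1 + D)*(b5 + b4*D/b2)/T ≤ m*b2 := by
    have h' : (b1+1)*(b5 + b4/b2)/(m*b2) ≤ T := le_trans (le_max_right _ _) (le_max_right _ _)
    have hnum : (b1 + D)*(b5 + b4*D/b2) ≤ (b1+1)*(b5 + b4/b2) := by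
      apply mul_le_mul (by linarith) _ (by positivity) (by linarith)
      have : b4 * D / b2 ≤ b4 / b2 := by
        gcongr
        nlinarith
      linarith
    rw [div_le_iff₀ hT0]
    calc (b1 + D)*(b5 + b4*D/b2) ≤ (b1+1)*(b5 + b4/b2) := hnum
      _ = ((b1+1)*(b5 + b4/b2)/(m*b2)) * (m*b2) := by field_simp
      _ ≤ T * (m*b2) := mul_le_mul_of_nonneg_right h' (by positivity)
      _ = m*b2*T := by ring
  refine ⟨D, T, hD0, hD1, hDb1, hTb, hT1, ?_⟩
  have expand : (b1 + D) * ((b5 + b4*D/b2)/T + (b3*D + b2 + (b1+D)/T)/(b1*b2))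
      = (b1 + D)*(b5 + b4*D/b2)/T + (b1 + D)*(b3*D + b2 + (b1+D)/T)/(b1*b2) := by
    ring
  rw [expand]
  have h2nd : (b1 + D)*(b3*D + b2 + (b1+D)/T)/(b1*b2) ≤ (b1*(1+m))*(b2 + 2*m)/(b1*b2) := by
    apply div_le_div_of_nonneg_right _ (by positivity)
    apply mul_le_mul (by nlinarith) (by linarith [hD3, hcm]) (by positivity) (by positivity)
  have h2nd' : (b1*(1+m))*(b2 + 2*m)/(b1*b2) = (1+m)*(b2+2*m)/b2 := by
    field_simp
  rw [h2nd'] at h2nd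
  -- final: m*b2 + (1+m)*(b2+2m)/b2 ≤ b2
  have final : m*b2 + (1+m)*(b2+2*m)/b2 ≤ b2 := by
    rw [← sub_nonneg]
    have expand2 : b2 - (m*b2 + (1+m)*(b2+2*m)/b2) = (b2*b2 - m*b2*b2 - (1+m)*(b2+2*m))/b2 := by
      field_simp; ring
    rw [expand2]
    apply div_nonneg _ (le_of_lt h2)
    nlinarith [hmB, hm1, hm0]
  linarith [hAm, h2nd]


set_option maxHeartbeats 1000000 in
lemma step (b1 b2 b3 b4 b5 D T y1 y2 y3 y4 y5 y6 y7 : ℝ)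
    (hb1 : 0 < b1) (hb2 : 0 < b2) (hb3 : 0 < b3) (hb4 : 0 < b4) (hb5 : 0 < b5)
    (hD0 : 0 < D) (hDlt : b1 + D < 1) (hTb : b1 + 1 ≤ T)
    (hstar : (b1 + D) * ((b5 + b4*D/b2)/T + (b3*D + b2 + (b1+D)/T)/(b1*b2)) ≤ b2)
    (hy1 : 0 < y1) (hy2 : 0 < y2)
    (e3 : y3 = (b1 + y2)/y1) (e4 : y4 = (b2 + y3)/y2) (e5 : y5 = (b3 + y4)/y3)
    (e6 : y6 = (b4 + y5)/y4) (e7 : y7 = (b5 + y6)/y5)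
    (hT1 : T ≤ y1) (hD2 : y2 ≤ D) :
    y1 / (b1 + D) ≤ y6 ∧ y7 ≤ y2 := by
  have hT0 : 0 < T := by linarith
  have hbD : (0:ℝ) < b1 + D := by linarith
  have hy3 : 0 < y3 := by rw [e3]; positivity
  have hy4 : 0 < y4 := by rw [e4]; positivity
  have hy5 : 0 < y5 := by rw [e5]; positivity
  have hy6 : 0 < y6 := by rw [e6]; positivity
  have m3 : y3 * y1 = b1 + y2 := by rw [e3]; field_simp
  have m4 : y4 * y2 = b2 + y3 := by rw [e4]; field_simp
  have m5 : y5 * y3 = b3 + y4 := by rw [e5]; field_simp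
  have m6 : y6 * y4 = b4 + y5 := by rw [e6]; field_simp
  set c : ℝ := (b1 + D)/T with hc
  have hc0 : 0 < c := by positivity
  have hy3c : y3 ≤ c := by
    rw [hc, le_div_iff₀ hT0]
    calc y3 * T ≤ y3 * y1 := mul_le_mul_of_nonneg_left hT1 hy3.le
      _ = b1 + y2 := m3
      _ ≤ b1 + D := by linarith
  -- first conclusion
  have hk : (y6*y3)*y4 = b4*y3 + (b3 + y4) := by
    calc (y6*y3)*y4 = (y6*y4)*y3 := by ring
      _ = (b4+y5)*y3 := by rw [m6]
      _ = b4*y3 + y5*y3 := by ring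
      _ = b4*y3 + (b3+y4) := by rw [m5]
  have h63 : 1 ≤ y6 * y3 := by
    have h' : 1*y4 ≤ (y6*y3)*y4 := by
      rw [hk, one_mul]
      have := mul_pos hb4 hy3
      linarith
    exact le_of_mul_le_mul_right h' hy4
  have conc1 : y1 / (b1 + D) ≤ y6 := by
    rw [div_le_iff₀ hbD]
    calc y1 = 1 * y1 := (one_mul y1).symm
      _ ≤ (y6 * y3) * y1 := mul_le_mul_of_nonneg_right h63 hy1.le
      _ = y6 * (b1 + y2) := by rw [mul_assoc, m3]
      _ ≤ y6 * (b1 + D) := mul_le_mul_of_nonneg_left (by linarith) hy6.le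
  -- upper bound on y5
  have hb1y3 : b1 ≤ y3 * y1 := by rw [m3]; linarith
  have hy5u : y5 * (b1 * y2) ≤ y1 * (b3*y2 + b2 + c) := by
    calc y5 * (b1 * y2) ≤ y5 * ((y3*y1) * y2) :=
          mul_le_mul_of_nonneg_left (mul_le_mul_of_nonneg_right hb1y3 hy2.le) hy5.le
      _ = ((y5 * y3) * y2) * y1 := by ring
      _ = ((b3 + y4) * y2) * y1 := by rw [m5]
      _ = (b3 * y2 + (b2 + y3)) * y1 := by rw [← m4]; ring
      _ ≤ (b3*y2 + b2 + c) * y1 := mul_le_mul_of_nonneg_right (by linarith) hy1.le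
      _ = y1 * (b3*y2 + b2 + c) := by ring
  have kb2 : b2 ≤ y4 * y2 := by rw [m4]; linarith
  -- upper bound on y6
  have hy6u : y6 * b2 ≤ b4*D + (y1*(b3*D + b2 + c))/b1 := by
    have h1 : y6 * b2 ≤ y6 * (y4*y2) := mul_le_mul_of_nonneg_left kb2 hy6.le
    have h2 : y6 * (y4 * y2) = b4 * y2 + y5 * y2 := by rw [← mul_assoc, m6]; ring
    have h5y2 : y5 * y2 ≤ (y1*(b3*y2 + b2 + c))/b1 := by
      rw [le_div_iff₀ hb1]
      calc y5 * y2 * b1 = y5 * (b1 * y2) := by ring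
        _ ≤ y1 * (b3*y2 + b2 + c) := hy5u
    have hmono : (y1*(b3*y2 + b2 + c))/b1 ≤ (y1*(b3*D + b2 + c))/b1 := by
      apply div_le_div_of_nonneg_right _ hb1.le
      apply mul_le_mul_of_nonneg_left _ hy1.le
      have := mul_le_mul_of_nonneg_left hD2 hb3.le
      linarith
    have hb4y2 : b4 * y2 ≤ b4 * D := mul_le_mul_of_nonneg_left hD2 hb4.le
    linarith
  -- lower bound on y2*y5
  have h25 : b2 * y1 ≤ (y2 * y5) * (b1 + D) := by
    have k2 : y4 ≤ y5*y3 := by rw [m5]; linarith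
    calc b2 * y1 ≤ (y4*y2) * y1 := mul_le_mul_of_nonneg_right kb2 hy1.le
      _ ≤ ((y5*y3)*y2) * y1 :=
          mul_le_mul_of_nonneg_right (mul_le_mul_of_nonneg_right k2 hy2.le) hy1.le
      _ = (y2 * y5) * (y3 * y1) := by ring
      _ = (y2 * y5) * (b1 + y2) := by rw [m3]
      _ ≤ (y2 * y5) * (b1 + D) :=
          mul_le_mul_of_nonneg_left (by linarith) (mul_pos hy2 hy5).le
  -- second conclusion
  set E : ℝ := (b5 + b4*D/b2)/T + (b3*D + b2 + (b1+D)/T)/(b1*b2) with hE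
  have hEb : E ≤ b2/(b1+D) := by
    rw [le_div_iff₀ hbD]
    calc E * (b1+D) = (b1+D) * E := by ring
      _ ≤ b2 := hstar
  have conc2 : y7 ≤ y2 := by
    rw [e7, div_le_iff₀ hy5]
    have hBchain : (b5 + y6) * b2 ≤ (y2*y5) * b2 := by
      have A1 : (b5 + y6)*b2 ≤ b5*b2 + b4*D + (y1*(b3*D+b2+c))/b1 := by
        have : (b5+y6)*b2 = b5*b2 + y6*b2 := by ring
        linarith [hy6u]
      have A2 : b5*b2 + b4*D ≤ (y1/T)*(b5*b2 + b4*D) := by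
        have h1T : 1 ≤ y1/T := (one_le_div hT0).2 hT1
        have hnn : (0:ℝ) ≤ b5*b2 + b4*D := by positivity
        nlinarith
      have A3 : (y1/T)*(b5*b2+b4*D) + (y1*(b3*D+b2+c))/b1 = y1 * (b2*E) := by
        rw [hE, hc]
        field_simp
      have A4 : y1 * (b2*E) ≤ y1 * (b2*(b2/(b1+D))) := by
        apply mul_le_mul_of_nonneg_left _ hy1.le
        exact mul_le_mul_of_nonneg_left hEb hb2.le
      have A5 : y1 * (b2*(b2/(b1+D))) ≤ ((y2*y5)*(b1+D)) * (b2/(b1+D)) := by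
        have : y1 * (b2*(b2/(b1+D))) = (b2*y1) * (b2/(b1+D)) := by ring
        rw [this]
        exact mul_le_mul_of_nonneg_right h25 (by positivity)
      have hcancel : (b1+D) * (b2/(b1+D)) = b2 := by
        rw [mul_comm, div_mul_cancel₀ _ hbD.ne']
      have A6 : ((y2*y5)*(b1+D)) * (b2/(b1+D)) = (y2*y5) * b2 := by
        rw [mul_assoc, hcancel]
      linarith
    exact le_of_mul_le_mul_right hBchain hb2
  exact ⟨conc1, conc2⟩


lemma per_shift (b : ℕ → ℝ) (hper : ∀ n, 1 ≤ n → b (n + 5) = b n) :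
    ∀ r, 1 ≤ r → ∀ k, b (5*k + r) = b r := by
  intro r hr k
  induction k with
  | zero => simp
  | succ k ih =>
    have h5 : 5*(k+1) + r = (5*k + r) + 5 := by ring
    rw [h5, hper _ (by omega), ih]

theorem core (b : ℕ → ℝ) (hb1 : 0 < b 1) (hb2 : 0 < b 2) (hb3 : 0 < b 3)
    (hb4 : 0 < b 4) (hb5 : 0 < b 5)
    (hper : ∀ n, 1 ≤ n → b (n + 5) = b n) (hlt : b 1 < 1) (hgt : 1 < b 2) :
    ∃ D T : ℝ, 0 < D ∧ 1 ≤ T ∧ ∀ y : ℕ → ℝ,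
      (∀ n, 1 ≤ n → 0 < y n) →
      (∀ n, 1 ≤ n → y (n + 2) = (b n + y (n + 1)) / y n) →
      T ≤ y 1 → y 2 ≤ D →
      (∀ ε : ℝ, 0 < ε → ∀ N : ℕ, ∃ n, N ≤ n ∧ y n < ε) ∧
      (∀ M : ℝ, ∀ N : ℕ, ∃ n, N ≤ n ∧ M < y n) := by
  obtain ⟨D, T, hD0, hD1, hDb1, hTb, hT1, hstar⟩ :=
    exists_consts (b 1) (b 2) (b 3) (b 4) (b 5) hb1 hb2 hb3 hb4 hb5 hlt hgt
  refine ⟨D, T, hD0, hT1, ?_⟩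
  intro y hypos hyrec hyT hyD
  set lam : ℝ := 1/(b 1 + D) with hlam
  have hbD : (0:ℝ) < b 1 + D := by linarith
  have hlam1 : 1 < lam := by
    rw [hlam, lt_div_iff₀ hbD, one_mul]
    linarith
  have hlam0 : 0 < lam := by linarith
  -- the five coefficients along the k-th period
  have hb5k : ∀ k : ℕ, b (5*k+1) = b 1 ∧ b (5*k+2) = b 2 ∧ b (5*k+3) = b 3 ∧
      b (5*k+4) = b 4 ∧ b (5*k+5) = b 5 := by
    intro k
    exact ⟨per_shift b hper 1 (by omega) k, per_shift b hper 2 (by omega) k,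
      per_shift b hper 3 (by omega) k, per_shift b hper 4 (by omega) k,
      per_shift b hper 5 (by omega) k⟩
  -- main induction
  have main : ∀ k : ℕ, (T ≤ y (5*k+1) ∧ lam^k * T ≤ y (5*k+1)) ∧ y (5*k+2) ≤ D := by
    intro k
    induction k with
    | zero =>
      constructor
      · constructor
        · simpa using hyT
        · simp only [pow_zero, one_mul]; simpa using hyT
      · simpa using hyD
    | succ k ih =>
      obtain ⟨⟨hT', hlamT⟩, hD'⟩ := ih
      obtain ⟨q1, q2, q3, q4, q5⟩ := hb5k k
      have hy1 := hypos (5*k+1) (by omega)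
      have hy2 := hypos (5*k+2) (by omega)
      -- recurrences
      have e3 : y (5*k+3) = (b 1 + y (5*k+2)) / y (5*k+1) := by
        have e := hyrec (5*k+1) (by omega)
        have h1 : 5*k+1+2 = 5*k+3 := by ring
        have h2 : 5*k+1+1 = 5*k+2 := by ring
        rw [h1, h2, q1] at e; exact e
      have e4 : y (5*k+4) = (b 2 + y (5*k+3)) / y (5*k+2) := by
        have e := hyrec (5*k+2) (by omega)
        have h1 : 5*k+2+2 = 5*k+4 := by ring
        have h2 : 5*k+2+1 = 5*k+3 := by ring
        rw [h1, h2, q2] at e; exact e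
      have e5 : y (5*k+5) = (b 3 + y (5*k+4)) / y (5*k+3) := by
        have e := hyrec (5*k+3) (by omega)
        have h1 : 5*k+3+2 = 5*k+5 := by ring
        have h2 : 5*k+3+1 = 5*k+4 := by ring
        rw [h1, h2, q3] at e; exact e
      have e6 : y (5*k+6) = (b 4 + y (5*k+5)) / y (5*k+4) := by
        have e := hyrec (5*k+4) (by omega)
        have h1 : 5*k+4+2 = 5*k+6 := by ring
        have h2 : 5*k+4+1 = 5*k+5 := by ring
        rw [h1, h2, q4] at e; exact e
      have e7 : y (5*k+7) = (b 5 + y (5*k+6)) / y (5*k+5) := by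
        have e := hyrec (5*k+5) (by omega)
        have h1 : 5*k+5+2 = 5*k+7 := by ring
        have h2 : 5*k+5+1 = 5*k+6 := by ring
        rw [h1, h2, q5] at e; exact e
      obtain ⟨hgrow, hshrink⟩ := step (b 1) (b 2) (b 3) (b 4) (b 5) D T
        (y (5*k+1)) (y (5*k+2)) (y (5*k+3)) (y (5*k+4)) (y (5*k+5)) (y (5*k+6)) (y (5*k+7))
        hb1 hb2 hb3 hb4 hb5 hD0 hDb1 hTb hstar hy1 hy2 e3 e4 e5 e6 e7 hT' hD'
      have idx1 : 5*(k+1)+1 = 5*k+6 := by ring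
      have idx2 : 5*(k+1)+2 = 5*k+7 := by ring
      rw [idx1, idx2]
      have hgrow' : lam * y (5*k+1) ≤ y (5*k+6) := by
        rw [hlam] at *
        calc 1/(b 1 + D) * y (5*k+1) = y (5*k+1) / (b 1 + D) := by ring
          _ ≤ y (5*k+6) := hgrow
      refine ⟨⟨?_, ?_⟩, by linarith⟩
      · calc T ≤ y (5*k+1) := hT'
          _ = 1 * y (5*k+1) := (one_mul _).symm
          _ ≤ lam * y (5*k+1) := mul_le_mul_of_nonneg_right hlam1.le hy1.le
          _ ≤ y (5*k+6) := hgrow'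
      · calc lam^(k+1) * T = lam * (lam^k * T) := by ring
          _ ≤ lam * y (5*k+1) := mul_le_mul_of_nonneg_left hlamT hlam0.le
          _ ≤ y (5*k+6) := hgrow'
  constructor
  · -- liminf 0 : use y (5k+3) ≤ (b 1 + D)/y(5k+1)
    intro ε hε N
    obtain ⟨k0, hk0⟩ := pow_unbounded_of_one_lt ((b 1 + 1)/ε) hlam1
    set k := max k0 N with hk
    have hkN : N ≤ k := le_max_right _ _
    have hpow : (b 1 + 1)/ε < lam^k := by
      calc (b 1 + 1)/ε < lam^k0 := hk0
        _ ≤ lam^k := pow_le_pow_right₀ hlam1.le (le_max_left _ _)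
    obtain ⟨⟨hT', hlamT⟩, hD'⟩ := main k
    obtain ⟨q1, _⟩ := hb5k k
    have hy1 := hypos (5*k+1) (by omega)
    have e3 : y (5*k+3) = (b 1 + y (5*k+2)) / y (5*k+1) := by
      have e := hyrec (5*k+1) (by omega)
      have h1 : 5*k+1+2 = 5*k+3 := by ring
      have h2 : 5*k+1+1 = 5*k+2 := by ring
      rw [h1, h2, q1] at e; exact e
    refine ⟨5*k+3, by omega, ?_⟩
    have hlamk : (0:ℝ) < lam^k := pow_pos hlam0 k
    have hlamky : lam^k ≤ y (5*k+1) := by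
      calc lam^k = lam^k * 1 := (mul_one _).symm
        _ ≤ lam^k * T := mul_le_mul_of_nonneg_left hT1 hlamk.le
        _ ≤ y (5*k+1) := hlamT
    rw [e3, div_lt_iff₀ hy1]
    calc b 1 + y (5*k+2) ≤ b 1 + 1 := by linarith
      _ < ε * lam^k := by
          rw [div_lt_iff₀ hε] at hpow
          linarith [hpow]
      _ ≤ ε * y (5*k+1) := mul_le_mul_of_nonneg_left hlamky hε.le
  · -- limsup ∞
    intro M N
    obtain ⟨k0, hk0⟩ := pow_unbounded_of_one_lt M hlam1
    set k := max k0 N with hk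
    have hkN : N ≤ k := le_max_right _ _
    obtain ⟨⟨hT', hlamT⟩, _⟩ := main k
    refine ⟨5*k+1, by omega, ?_⟩
    have hlamk : (0:ℝ) < lam^k := pow_pos hlam0 k
    calc M < lam^k0 := hk0
      _ ≤ lam^k := pow_le_pow_right₀ hlam1.le (le_max_left _ _)
      _ = lam^k * 1 := (mul_one _).symm
      _ ≤ lam^k * T := mul_le_mul_of_nonneg_left hT1 hlamk.le
      _ ≤ y (5*k+1) := hlamT


theorem master (a : ℕ → ℝ) (hapos : ∀ n, 1 ≤ n → 0 < a n)
    (haper : ∀ n, 1 ≤ n → a (n + 5) = a n) (s : ℕ)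
    (hs1 : a (s+1) < 1) (hs2 : 1 < a (s+2)) :
    ∃ U : Set (ℝ × ℝ), IsOpen U ∧ U.Nonempty ∧ U ⊆ {p : ℝ × ℝ | 0 < p.1 ∧ 0 < p.2} ∧
      ∀ p ∈ U, ∀ x : ℕ → ℝ, x 1 = p.1 → x 2 = p.2 →
        (∀ n, 1 ≤ n → x (n + 2) = (a n + x (n + 1)) / x n) →
        (∀ ε : ℝ, 0 < ε → ∀ N : ℕ, ∃ n, N ≤ n ∧ x n < ε) ∧
        (∀ M : ℝ, ∀ N : ℕ, ∃ n, N ≤ n ∧ M < x n) := by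
  set b : ℕ → ℝ := fun n => a (s + n) with hb
  have hbpos : ∀ i, 1 ≤ i → 0 < b i := fun i hi => hapos (s + i) (by omega)
  have hbper : ∀ n, 1 ≤ n → b (n + 5) = b n := by
    intro n hn
    show a (s + (n + 5)) = a (s + n)
    have h : s + (n + 5) = (s + n) + 5 := by ring
    rw [h, haper (s + n) (by omega)]
  have hblt : b 1 < 1 := by show a (s+1) < 1; exact hs1
  have hbgt : 1 < b 2 := by show 1 < a (s+2); exact hs2
  obtain ⟨D, T, hD0, hT1, hprop⟩ := core b (hbpos 1 le_rfl) (hbpos 2 (by omega))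
    (hbpos 3 (by omega)) (hbpos 4 (by omega)) (hbpos 5 (by omega)) hbper hblt hbgt
  set Q : Set (ℝ × ℝ) := {q : ℝ × ℝ | 0 < q.1 ∧ 0 < q.2} with hQ
  have hQopen : IsOpen Q := by
    have : Q = (Set.Ioi (0:ℝ)) ×ˢ (Set.Ioi (0:ℝ)) := by
      ext q; simp [hQ, Set.mem_prod]
    rw [this]
    exact isOpen_Ioi.prod isOpen_Ioi
  set R : Set (ℝ × ℝ) := (Set.Ioi T) ×ˢ (Set.Ioo 0 D) with hR
  have hRopen : IsOpen R := isOpen_Ioi.prod isOpen_Ioo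
  refine ⟨Q ∩ ((fun q => F a q s) ⁻¹' R), ?_, ?_, Set.inter_subset_left, ?_⟩
  · -- open
    rw [isOpen_iff_mem_nhds]
    intro p hp
    obtain ⟨hpQ, hpR⟩ := hp
    exact Filter.inter_mem (hQopen.mem_nhds hpQ)
      ((F_contAt a hapos p hpQ.1 hpQ.2 s).preimage_mem_nhds (hRopen.mem_nhds hpR))
  · -- nonempty
    obtain ⟨p, hp1, hp2, hFp⟩ := F_surj a hapos s (T+1, D/2) (by simp; linarith) (by simp; linarith)
    refine ⟨p, ⟨hp1, hp2⟩, ?_⟩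
    show F a p s ∈ R
    rw [hFp, hR]
    constructor
    · show T < T+1; linarith
    · exact ⟨by linarith, by linarith⟩
  · -- main
    intro p hp x hx1 hx2 hrec
    obtain ⟨hpQ, hpR⟩ := hp
    have horb := F_orbit a p x hx1 hx2 hrec
    have hxpos : ∀ n, 1 ≤ n → 0 < x n := by
      intro n hn
      obtain ⟨m, rfl⟩ : ∃ m, n = m + 1 := ⟨n - 1, by omega⟩
      have h := (F_pos a hapos p hpQ.1 hpQ.2 m).1
      rw [horb m] at h
      exact h
    have hFmem : (x (s+1), x (s+2)) ∈ R := by rw [← horb s]; exact hpR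
    have hy1 : T ≤ x (s+1) := le_of_lt hFmem.1
    have hy2 : x (s+2) ≤ D := le_of_lt hFmem.2.2
    have hyrec : ∀ n, 1 ≤ n → x (s + (n+2)) = (b n + x (s + (n+1))) / x (s + n) :=
      fun n hn => hrec (s + n) (by omega)
    obtain ⟨hsmall, hlarge⟩ := hprop (fun n => x (s + n))
      (fun n hn => hxpos (s + n) (by omega)) hyrec hy1 hy2
    constructor
    · intro ε hε N
      obtain ⟨n, hnN, hlt⟩ := hsmall ε hε N
      exact ⟨s + n, by omega, hlt⟩
    · intro M N
      obtain ⟨n, hnN, hlt⟩ := hlarge M N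
      exact ⟨s + n, by omega, hlt⟩

lemma adj (c1 c2 c3 c4 c5 : ℝ) (h1 : c1 ≠ 1) (h2 : c2 ≠ 1) (h3 : c3 ≠ 1) (h4 : c4 ≠ 1)
    (h5 : c5 ≠ 1)
    (hmin : min (min (min (min c1 c2) c3) c4) c5 < 1)
    (hmax : 1 < max (max (max (max c1 c2) c3) c4) c5) :
    (c1 < 1 ∧ 1 < c2) ∨ (c2 < 1 ∧ 1 < c3) ∨ (c3 < 1 ∧ 1 < c4) ∨ (c4 < 1 ∧ 1 < c5) ∨
      (c5 < 1 ∧ 1 < c1) := by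
  simp only [min_lt_iff, lt_max_iff] at hmin hmax
  rcases h1.lt_or_gt with p1 | p1 <;> rcases h2.lt_or_gt with p2 | p2 <;>
    rcases h3.lt_or_gt with p3 | p3 <;> rcases h4.lt_or_gt with p4 | p4 <;>
    rcases h5.lt_or_gt with p5 | p5 <;>
    first
      | exact Or.inl ⟨by linarith, by linarith⟩
      | exact Or.inr (Or.inl ⟨by linarith, by linarith⟩)
      | exact Or.inr (Or.inr (Or.inl ⟨by linarith, by linarith⟩))
      | exact Or.inr (Or.inr (Or.inr (Or.inl ⟨by linarith, by linarith⟩)))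
      | exact Or.inr (Or.inr (Or.inr (Or.inr ⟨by linarith, by linarith⟩)))
      | (rcases hmin with ((((h | h) | h) | h) | h) <;> linarith)
      | (rcases hmax with ((((h | h) | h) | h) | h) <;> linarith)

end LynessAux

/-- Proposition 13 of the paper: for a `5`-periodic sequence of positive coefficients
`a_1, …, a_5`, none equal to `1` and with `min aᵢ < 1 < max aᵢ`, there is a nonempty open
set of positive initial conditions for which the solution of the Lyness recurrence
`x_{n+2} = (a_n + x_{n+1})/x_n` satisfies `liminf xₙ = 0` and `limsup xₙ = +∞`; in
particular the recurrence is not persistent. -/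
theorem lyness_five_periodic_non_persistent
    (a1 a2 a3 a4 a5 : ℝ)
    (h1 : 0 < a1) (h2 : 0 < a2) (h3 : 0 < a3) (h4 : 0 < a4) (h5 : 0 < a5)
    (hne1 : a1 ≠ 1) (hne2 : a2 ≠ 1) (hne3 : a3 ≠ 1) (hne4 : a4 ≠ 1) (hne5 : a5 ≠ 1)
    (hmin : min (min (min (min a1 a2) a3) a4) a5 < 1)
    (hmax : 1 < max (max (max (max a1 a2) a3) a4) a5)
    (a : ℕ → ℝ)
    (ha1 : a 1 = a1) (ha2 : a 2 = a2) (ha3 : a 3 = a3) (ha4 : a 4 = a4) (ha5 : a 5 = a5)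
    (haper : ∀ n, 1 ≤ n → a (n + 5) = a n) :
    (∃ U : Set (ℝ × ℝ), IsOpen U ∧ U.Nonempty ∧ U ⊆ {p : ℝ × ℝ | 0 < p.1 ∧ 0 < p.2} ∧
      ∀ p ∈ U, ∀ x : ℕ → ℝ, x 1 = p.1 → x 2 = p.2 →
        (∀ n, 1 ≤ n → x (n + 2) = (a n + x (n + 1)) / x n) →
        (∀ ε : ℝ, 0 < ε → ∀ N : ℕ, ∃ n, N ≤ n ∧ x n < ε) ∧
        (∀ M : ℝ, ∀ N : ℕ, ∃ n, N ≤ n ∧ M < x n)) ∧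
    ¬ (∀ x : ℕ → ℝ, 0 < x 1 → 0 < x 2 →
        (∀ n, 1 ≤ n → x (n + 2) = (a n + x (n + 1)) / x n) →
        ∃ c C : ℝ, 0 < c ∧ c < C ∧ ∀ n, 1 ≤ n → c < x n ∧ x n < C) := by
  have hapos : ∀ n, 1 ≤ n → 0 < a n := by
    intro n hn
    obtain ⟨k, r, hr1, hr5, rfl⟩ : ∃ k r, 1 ≤ r ∧ r ≤ 5 ∧ n = 5*k + r :=
      ⟨(n-1)/5, n - 5*((n-1)/5), by omega, by omega, by omega⟩
    rw [LynessAux.per_shift a haper r hr1 k]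
    interval_cases r
    · rw [ha1]; exact h1
    · rw [ha2]; exact h2
    · rw [ha3]; exact h3
    · rw [ha4]; exact h4
    · rw [ha5]; exact h5
  have ha6 : a 6 = a1 := by
    have := haper 1 le_rfl
    rw [show (6:ℕ) = 1 + 5 from rfl, this, ha1]
  -- find the shift s with a (s+1) < 1 < a (s+2)
  have hshift : ∃ s : ℕ, a (s+1) < 1 ∧ 1 < a (s+2) := by
    rcases LynessAux.adj a1 a2 a3 a4 a5 hne1 hne2 hne3 hne4 hne5 hmin hmax with
      ⟨u, v⟩ | ⟨u, v⟩ | ⟨u, v⟩ | ⟨u, v⟩ | ⟨u, v⟩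
    · exact ⟨0, by rw [show (0:ℕ)+1 = 1 from rfl, ha1]; exact u,
        by rw [show (0:ℕ)+2 = 2 from rfl, ha2]; exact v⟩
    · exact ⟨1, by rw [show (1:ℕ)+1 = 2 from rfl, ha2]; exact u,
        by rw [show (1:ℕ)+2 = 3 from rfl, ha3]; exact v⟩
    · exact ⟨2, by rw [show (2:ℕ)+1 = 3 from rfl, ha3]; exact u,
        by rw [show (2:ℕ)+2 = 4 from rfl, ha4]; exact v⟩
    · exact ⟨3, by rw [show (3:ℕ)+1 = 4 from rfl, ha4]; exact u,
        by rw [show (3:ℕ)+2 = 5 from rfl, ha5]; exact v⟩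
    · exact ⟨4, by rw [show (4:ℕ)+1 = 5 from rfl, ha5]; exact u,
        by rw [show (4:ℕ)+2 = 6 from rfl, ha6]; exact v⟩
  obtain ⟨s, hs1, hs2⟩ := hshift
  obtain ⟨U, hUo, hUne, hUsub, hUmain⟩ := LynessAux.master a hapos haper s hs1 hs2
  refine ⟨⟨U, hUo, hUne, hUsub, hUmain⟩, ?_⟩
  intro H
  obtain ⟨p, hpU⟩ := hUne
  have hpQ := hUsub hpU
  -- explicit orbit through p
  set x : ℕ → ℝ := fun n => if n = 0 then 1 else (LynessAux.F a p (n-1)).1 with hxdef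
  have hxsucc : ∀ j : ℕ, x (j+1) = (LynessAux.F a p j).1 := by
    intro j
    rw [hxdef]
    simp
  have hx1 : x 1 = p.1 := by rw [hxsucc 0]; rfl
  have hx2 : x 2 = p.2 := by
    rw [hxsucc 1]
    show ((LynessAux.F a p 0).2, _).1 = p.2
    rfl
  have hrecx : ∀ n, 1 ≤ n → x (n + 2) = (a n + x (n + 1)) / x n := by
    intro n hn
    obtain ⟨m, rfl⟩ : ∃ m, n = m + 1 := ⟨n - 1, by omega⟩
    rw [show m + 1 + 2 = (m+2) + 1 from by ring, hxsucc (m+2),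
      show m + 1 + 1 = (m+1) + 1 from rfl, hxsucc (m+1), hxsucc m]
    show ((LynessAux.F a p (m+1)).2, _).1 = _
    simp only []
    show (LynessAux.F a p (m+1)).2 = _
    rw [show LynessAux.F a p (m+1) = ((LynessAux.F a p m).2,
      (a (m+1) + (LynessAux.F a p m).2) / (LynessAux.F a p m).1) from rfl]
  obtain ⟨c, C, hc, hcC, hbound⟩ := H x (by rw [hx1]; exact hpQ.1) (by rw [hx2]; exact hpQ.2) hrecx
  obtain ⟨-, hlarge⟩ := hUmain p hpU x hx1 hx2 hrecx
  obtain ⟨n, hn1, hnC⟩ := hlarge C 1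
  have := (hbound n hn1).2
  linarith
end

section
/- Let a, b, c, d, e, f be positive real numbers and let (a_n) be the 6-periodic sequence with a_1 = a, a_2 = b, a_3 = c, a_4 = d, a_5 = e, a_6 = f. Then the recurrence x_{n+2} = (a_n + x_{n+1})/x_n is persistent: for every initial condition x_1 > 0, x_2 > 0 there exist constants 0 < m < M (depending on the initial condition) such that m < x_n < M for all n. -/
/-- The biquadratic numerator of the `6`-periodic family of invariants of the Lyness map. -/
def lynessB (p q r s t u x y : ℝ) : ℝ :=
  p * u + (p * t + u) * y + t * y ^ 2 + (p + q * u) * x + s * x * y ^ 2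
    + q * x ^ 2 + r * x ^ 2 * y

/-- Conservation: one step of the Lyness map sends the level sets of one member of the
family of invariants onto the level sets of the (cyclically shifted) next member. -/
lemma lynessB_step (p q r s t u x y : ℝ) (hx : 0 < x) (hy : 0 < y) (hpy : 0 < p + y) :
    lynessB q r s t u p y ((p + y) / x) / (y * ((p + y) / x))
      = lynessB p q r s t u x y / (x * y) := by
  have hz : (0:ℝ) < (p + y) / x := div_pos hpy hx
  unfold lynessB
  field_simp
  ring

/-- From the level-set equation, extract the bounds needed for persistence. -/
lemma lynessB_bounds (p q r s t u v P Q K : ℝ) (hv : 0 < v)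
    (h0 : v ≤ p) (h1 : v ≤ q) (h2 : v ≤ r) (h3 : v ≤ s) (h4 : v ≤ t) (h5 : v ≤ u)
    (hP : 0 < P) (hQ : 0 < Q)
    (hE : lynessB p q r s t u P Q = K * (P * Q)) :
    0 < K ∧ v * P ≤ K ∧ v ≤ K * P := by
  have hp : 0 < p := lt_of_lt_of_le hv h0
  have hq : 0 < q := lt_of_lt_of_le hv h1
  have hr : 0 < r := lt_of_lt_of_le hv h2
  have hs : 0 < s := lt_of_lt_of_le hv h3
  have ht : 0 < t := lt_of_lt_of_le hv h4
  have hu : 0 < u := lt_of_lt_of_le hv h5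
  have hPQ : 0 < P * Q := mul_pos hP hQ
  unfold lynessB at hE
  have c1 : 0 < p * u := mul_pos hp hu
  have c2 : v * Q ≤ (p * t + u) * Q :=
    mul_le_mul_of_nonneg_right (by nlinarith [mul_pos hp ht]) hQ.le
  have c3 : 0 ≤ t * Q ^ 2 := by positivity
  have c4 : v * P ≤ (p + q * u) * P :=
    mul_le_mul_of_nonneg_right (by nlinarith [mul_pos hq hu]) hP.le
  have c5 : 0 ≤ s * P * Q ^ 2 := by positivity
  have c6 : 0 < q * P ^ 2 := by positivity
  have c7 : v * (P ^ 2 * Q) ≤ r * (P ^ 2 * Q) :=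
    mul_le_mul_of_nonneg_right h2 (by positivity)
  have hvQ : 0 < v * Q := mul_pos hv hQ
  have hvP : 0 < v * P := mul_pos hv hP
  have hvPPQ : 0 < v * (P ^ 2 * Q) := by positivity
  have hKPQ : 0 < K * (P * Q) := by linarith
  have hK : 0 < K := by nlinarith [hKPQ, hPQ]
  refine ⟨hK, ?_, ?_⟩
  · -- from the term r * P^2 * Q : v * P ≤ K
    nlinarith [hPQ]
  · -- from the term (p*t+u) * Q : v ≤ K * P
    nlinarith [hQ]

/-- Proposition 14 of the paper (persistence for `k = 6`): for any `6`-periodic sequence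
of positive coefficients, every solution of the Lyness recurrence
`x_{n+2} = (a_n + x_{n+1})/x_n` with positive initial conditions is bounded away from `0`
and from `+∞`. -/
theorem lyness_six_periodic_persistent
    (a b c d e f : ℝ)
    (ha : 0 < a) (hb : 0 < b) (hc : 0 < c) (hd : 0 < d) (he : 0 < e) (hf : 0 < f)
    (A : ℕ → ℝ)
    (hA1 : A 1 = a) (hA2 : A 2 = b) (hA3 : A 3 = c)
    (hA4 : A 4 = d) (hA5 : A 5 = e) (hA6 : A 6 = f)
    (hAper : ∀ n, 1 ≤ n → A (n + 6) = A n) :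
    ∀ x : ℕ → ℝ, 0 < x 1 → 0 < x 2 →
      (∀ n, 1 ≤ n → x (n + 2) = (A n + x (n + 1)) / x n) →
      ∃ m M : ℝ, 0 < m ∧ m < M ∧ ∀ n, 1 ≤ n → m < x n ∧ x n < M := by
  intro x hx1 hx2 hrec
  set v : ℝ := min (min a b) (min (min c d) (min e f)) with hv_def
  have hv : 0 < v := by
    simp only [hv_def, lt_min_iff]
    exact ⟨⟨ha, hb⟩, ⟨hc, hd⟩, he, hf⟩
  -- v ≤ A n for every n ≥ 1
  have hAlb : ∀ n, 1 ≤ n → v ≤ A n := by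
    intro n
    induction n using Nat.strong_induction_on with
    | _ n ih =>
      intro hn
      by_cases h6 : n ≤ 6
      · interval_cases n <;>
          simp [hA1, hA2, hA3, hA4, hA5, hA6, hv_def, min_le_iff]
      · have hper := hAper (n - 6) (by omega)
        have hne : n - 6 + 6 = n := by omega
        rw [hne] at hper
        rw [hper]
        exact ih (n - 6) (by omega) (by omega)
  have hApos : ∀ n, 1 ≤ n → 0 < A n := fun n hn => lt_of_lt_of_le hv (hAlb n hn)
  -- positivity of the solution
  have hxpos : ∀ n, 1 ≤ n → 0 < x n := by
    intro n
    induction n using Nat.strong_induction_on with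
    | _ n ih =>
      intro hn
      by_cases h2 : n ≤ 2
      · interval_cases n
        · exact hx1
        · exact hx2
      · have h0 := hrec (n - 2) (by omega)
        have e1 : n - 2 + 2 = n := by omega
        have e2 : n - 2 + 1 = n - 1 := by omega
        rw [e1, e2] at h0
        rw [h0]
        exact div_pos
          (add_pos (hApos (n - 2) (by omega)) (ih (n - 1) (by omega) (by omega)))
          (ih (n - 2) (by omega) (by omega))
  -- the invariant is conserved
  have hcons : ∀ n, 1 ≤ n →
      lynessB (A n) (A (n+1)) (A (n+2)) (A (n+3)) (A (n+4)) (A (n+5)) (x n) (x (n+1))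
          / (x n * x (n+1))
        = lynessB (A 1) (A 2) (A 3) (A 4) (A 5) (A 6) (x 1) (x 2) / (x 1 * x 2) := by
    intro n hn
    induction n, hn using Nat.le_induction with
    | base => norm_num
    | succ n hn ihW =>
      have hxn : 0 < x n := hxpos n hn
      have hxn1 : 0 < x (n+1) := hxpos (n+1) (by omega)
      have hpy : 0 < A n + x (n+1) := add_pos (hApos n hn) hxn1
      show lynessB (A (n+1)) (A (n+2)) (A (n+3)) (A (n+4)) (A (n+5)) (A (n+6))
          (x (n+1)) (x (n+2)) / (x (n+1) * x (n+2))
        = lynessB (A 1) (A 2) (A 3) (A 4) (A 5) (A 6) (x 1) (x 2) / (x 1 * x 2)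
      rw [hAper n hn, hrec n hn,
        lynessB_step (A n) (A (n+1)) (A (n+2)) (A (n+3)) (A (n+4)) (A (n+5))
          (x n) (x (n+1)) hxn hxn1 hpy]
      exact ihW
  set K : ℝ := lynessB (A 1) (A 2) (A 3) (A 4) (A 5) (A 6) (x 1) (x 2) / (x 1 * x 2)
    with hK_def
  -- bounds at every index
  have hbd : ∀ n, 1 ≤ n → 0 < K ∧ v * x n ≤ K ∧ v ≤ K * x n := by
    intro n hn
    have hxn : 0 < x n := hxpos n hn
    have hxn1 : 0 < x (n+1) := hxpos (n+1) (by omega)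
    have hEq := hcons n hn
    have hne : x n * x (n+1) ≠ 0 := by positivity
    have hE : lynessB (A n) (A (n+1)) (A (n+2)) (A (n+3)) (A (n+4)) (A (n+5))
        (x n) (x (n+1)) = K * (x n * x (n+1)) := (div_eq_iff hne).mp hEq
    exact lynessB_bounds (A n) (A (n+1)) (A (n+2)) (A (n+3)) (A (n+4)) (A (n+5)) v
      (x n) (x (n+1)) K hv (hAlb n hn) (hAlb (n+1) (by omega)) (hAlb (n+2) (by omega))
      (hAlb (n+3) (by omega)) (hAlb (n+4) (by omega)) (hAlb (n+5) (by omega))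
      hxn hxn1 hE
  have hK : 0 < K := (hbd 1 le_rfl).1
  have hvK : v ≤ K := by
    obtain ⟨-, hub1, hlb1⟩ := hbd 1 le_rfl
    nlinarith [hxpos 1 le_rfl, mul_pos hv hK]
  refine ⟨v / (2 * K), 2 * K / v + 1, by positivity, ?_, ?_⟩
  · -- m < M
    have hm : v / (2 * K) ≤ 1 / 2 := by
      rw [div_le_div_iff₀ (by positivity) (by norm_num)]
      nlinarith
    have hM : (2:ℝ) ≤ 2 * K / v := by
      rw [le_div_iff₀ hv]
      nlinarith
    linarith
  · intro n hn
    obtain ⟨-, hub, hlb⟩ := hbd n hn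
    have hxn : 0 < x n := hxpos n hn
    constructor
    · rw [div_lt_iff₀ (by positivity)]
      nlinarith
    · have h1 : x n ≤ K / v := by
        rw [le_div_iff₀ hv]
        nlinarith
      have h2 : K / v ≤ 2 * K / v := by
        have e : 2 * K / v = K / v + K / v := by ring
        have := div_pos hK hv
        linarith
      linarith
end

section
/- Let a, b, c, d be positive real numbers. Then the composition map F_{d,c,b,a} = F_d ∘ F_c ∘ F_b ∘ F_a has exactly one fixed point in Q⁺; moreover, a point (x,y) ∈ Q⁺ satisfies F_{d,c,b,a}(x,y) = (x,y) if and only if x = y² + (a−c)y − d and y = x² + (d−b)x − a. -/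
/-- A point `(x,y)` of the open first quadrant is fixed by the composition
`F_d ∘ F_c ∘ F_b ∘ F_a` iff it satisfies the two quadratic equations. -/
lemma lyness_fixed_iff (a b c d x y : ℝ) (ha : 0 < a) (hb : 0 < b)
    (hc : 0 < c) (hd : 0 < d) (hx : 0 < x) (hy : 0 < y) :
    (lyness d ∘ lyness c ∘ lyness b ∘ lyness a) (x, y) = (x, y) ↔
      x = y ^ 2 + (a - c) * y - d ∧ y = x ^ 2 + (d - b) * x - a := by
  have hx0 := hx.ne'
  have hy0 := hy.ne'
  set z : ℝ := (a + y) / x with hzdef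
  set w : ℝ := (b + z) / y with hwdef
  have hzpos : 0 < z := div_pos (by linarith) hx
  have hwpos : 0 < w := div_pos (by linarith) hy
  have hz0 := hzpos.ne'
  have hw0 := hwpos.ne'
  have hz : x * z = a + y := by rw [hzdef]; field_simp
  have hw : y * w = b + z := by rw [hwdef]; field_simp
  have hcomp : (lyness d ∘ lyness c ∘ lyness b ∘ lyness a) (x, y)
      = ((c + w) / z, (d + (c + w) / z) / w) := by
    simp only [Function.comp_apply, lyness]
    rfl
  rw [hcomp, Prod.mk.injEq]
  constructor
  · rintro ⟨h1, h2⟩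
    have h1' : c + w = x * z := by
      field_simp at h1; linarith
    rw [h1] at h2
    have h2' : d + x = y * w := by
      field_simp at h2; linarith
    constructor
    · have hwv : w = a + y - c := by linarith [hz ▸ h1']
      nlinarith [h2', hwv]
    · have hzv : z = d + x - b := by linarith [hw ▸ h2']
      nlinarith [hz, hzv]
  · rintro ⟨h1, h2⟩
    have hzv : z = x + d - b := by
      have : x * z = x * (x + d - b) := by rw [hz]; linarith [h2]
      exact mul_left_cancel₀ hx0 this
    have hwv : w = y + a - c := by
      have : y * w = y * (y + a - c) := by rw [hw, hzv]; nlinarith [h1]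
      exact mul_left_cancel₀ hy0 this
    have h1' : (c + w) / z = x := by
      rw [hwv]
      rw [div_eq_iff hz0]
      nlinarith [hz, hzv]
    constructor
    · exact h1'
    · rw [h1', div_eq_iff hw0, hwv]
      nlinarith [h1]

/-- The pair of quadratic equations has at most one solution in the open quadrant. -/
lemma lyness_uniq (a b c d x y x' y' : ℝ)
    (hx : 0 < x) (hy : 0 < y) (hx' : 0 < x') (hy' : 0 < y')
    (hd : 0 < d) (ha : 0 < a)
    (e1 : x = y ^ 2 + (a - c) * y - d) (e2 : y = x ^ 2 + (d - b) * x - a)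
    (e1' : x' = y' ^ 2 + (a - c) * y' - d) (e2' : y' = x' ^ 2 + (d - b) * x' - a) :
    x = x' ∧ y = y' := by
  have hP : x - x' = (y - y') * (y + y' + a - c) := by linear_combination e1 - e1'
  have hQ : y - y' = (x - x') * (x + x' + d - b) := by linear_combination e2 - e2'
  by_cases hxx : x = x'
  · refine ⟨hxx, ?_⟩
    have : y - y' = 0 := by rw [hQ, hxx]; ring
    linarith
  · exfalso
    have hsub : x - x' ≠ 0 := sub_ne_zero.mpr hxx
    have hPQ : (y + y' + a - c) * (x + x' + d - b) = 1 := by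
      have h : (x - x') * ((y + y' + a - c) * (x + x' + d - b) - 1) = 0 := by
        linear_combination -hP - (y + y' + a - c) * hQ
      rcases mul_eq_zero.mp h with h | h
      · exact absurd h hsub
      · linarith
    have hw : y * (y + a - c) = x + d := by linear_combination -e1
    have hz : x * (x + d - b) = a + y := by linear_combination -e2
    have hwpos : 0 < y + a - c := by nlinarith
    have hzpos : 0 < x + d - b := by nlinarith
    have key : x * y = (x + d + y * y') * (a + y + x * x') := by
      calc x * y = x * y * ((y + y' + a - c) * (x + x' + d - b)) := by rw [hPQ]; ring
        _ = (y * (y + y' + a - c)) * (x * (x + x' + d - b)) := by ring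
        _ = (x + d + y * y') * (a + y + x * x') := by
            rw [show y * (y + y' + a - c) = x + d + y * y' by linear_combination hw,
                show x * (x + x' + d - b) = a + y + x * x' by linear_combination hz]
    nlinarith [mul_pos hy hy', mul_pos hx hx', mul_pos hx hy,
      mul_pos (mul_pos hy hy') hx, mul_pos (mul_pos hx hx') hy,
      mul_pos (mul_pos hy hy') (mul_pos hx hx'), mul_pos hd ha, mul_pos hd hy,
      mul_pos hx ha, mul_pos hd (mul_pos hx hx'), mul_pos (mul_pos hy hy') ha]

/-- The pair of quadratic equations has a solution in the open quadrant. -/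
lemma lyness_exists (a b c d : ℝ) (ha : 0 < a) (hb : 0 < b) (hc : 0 < c) (hd : 0 < d) :
    ∃ x y : ℝ, 0 < x ∧ 0 < y ∧
      x = y ^ 2 + (a - c) * y - d ∧ y = x ^ 2 + (d - b) * x - a := by
  set s : ℝ := Real.sqrt ((d - b) ^ 2 + 4 * a) with hsdef
  have hs2 : s ^ 2 = (d - b) ^ 2 + 4 * a := Real.sq_sqrt (by positivity)
  have hsnn : 0 ≤ s := Real.sqrt_nonneg _
  set x₀ : ℝ := (s - (d - b)) / 2 with hx0def
  have hx0pos : 0 < x₀ := by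
    rw [hx0def]
    nlinarith [hs2, hsnn, sq_nonneg (s - (d - b)), sq_nonneg (s + (d - b))]
  have hroot : x₀ ^ 2 + (d - b) * x₀ - a = 0 := by
    rw [hx0def]; linear_combination hs2 / 4
  clear_value s
  clear_value x₀
  set f : ℝ → ℝ := fun x =>
    (x ^ 2 + (d - b) * x - a) ^ 2 + (a - c) * (x ^ 2 + (d - b) * x - a) - d - x with hfdef
  have hfc : Continuous f := by rw [hfdef]; continuity
  clear_value f
  set M : ℝ := x₀ + a + b + c + d + 2 with hMdef
  clear_value M
  have hx0M : x₀ ≤ M := by rw [hMdef]; linarith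
  have hfx0val : f x₀ = -d - x₀ := by
    rw [hfdef]; simp only
    rw [show x₀ ^ 2 + (d - b) * x₀ - a = 0 from hroot]; ring
  have hfx0 : f x₀ ≤ 0 := by rw [hfx0val]; linarith
  have hM1 : a + b + c + d + 2 ≤ M := by rw [hMdef]; linarith
  have hMpos : (0:ℝ) < M := by linarith
  have hyM : M + c + d + 1 ≤ M ^ 2 + (d - b) * M - a := by
    nlinarith [mul_le_mul_of_nonneg_left hM1 hMpos.le]
  have hfM : 0 ≤ f M := by
    rw [hfdef]; simp only
    set yM : ℝ := M ^ 2 + (d - b) * M - a with hyMdef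
    nlinarith [hyM, mul_le_mul_of_nonneg_left hyM (by nlinarith : (0:ℝ) ≤ yM)]
  obtain ⟨x₁, hx₁mem, hx₁⟩ := intermediate_value_Icc hx0M hfc.continuousOn
    (Set.mem_Icc.mpr ⟨hfx0, hfM⟩)
  have hx₁gt : x₀ < x₁ := by
    rcases lt_or_eq_of_le hx₁mem.1 with h | h
    · exact h
    · exfalso; rw [← h, hfx0val] at hx₁; linarith
  refine ⟨x₁, x₁ ^ 2 + (d - b) * x₁ - a, by linarith, ?_, ?_, rfl⟩
  · have h1 : 0 < x₁ + x₀ + d - b := by nlinarith [hroot, hx0pos, hx₁gt]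
    have h2 : x₁ ^ 2 + (d - b) * x₁ - a = (x₁ - x₀) * (x₁ + x₀ + d - b) := by
      linear_combination hroot
    rw [h2]; exact mul_pos (by linarith) h1
  · have := hx₁
    rw [hfdef] at this; simp only at this
    linarith

/-- Lemma 10 (i) of the paper: the composition map `F_{d,c,b,a} = F_d ∘ F_c ∘ F_b ∘ F_a`
has exactly one fixed point in the open first quadrant, and a point `(x,y)` of the open
first quadrant is fixed if and only if `x = y² + (a−c)y − d` and `y = x² + (d−b)x − a`. -/
theorem lyness_four_composition_unique_fixed_point
    (a b c d : ℝ) (ha : 0 < a) (hb : 0 < b) (hc : 0 < c) (hd : 0 < d) :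
    (∃! p : ℝ × ℝ, 0 < p.1 ∧ 0 < p.2 ∧
        (lyness d ∘ lyness c ∘ lyness b ∘ lyness a) p = p) ∧
    (∀ x y : ℝ, 0 < x → 0 < y →
        ((lyness d ∘ lyness c ∘ lyness b ∘ lyness a) (x, y) = (x, y) ↔
          x = y ^ 2 + (a - c) * y - d ∧ y = x ^ 2 + (d - b) * x - a)) := by
  constructor
  · obtain ⟨x, y, hx, hy, e1, e2⟩ := lyness_exists a b c d ha hb hc hd
    refine ⟨(x, y), ⟨hx, hy, (lyness_fixed_iff a b c d x y ha hb hc hd hx hy).mpr ⟨e1, e2⟩⟩, ?_⟩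
    rintro ⟨x', y'⟩ ⟨hx', hy', hfix'⟩
    obtain ⟨e1', e2'⟩ := (lyness_fixed_iff a b c d x' y' ha hb hc hd hx' hy').mp hfix'
    obtain ⟨h1, h2⟩ := lyness_uniq a b c d x' y' x y hx' hy' hx hy hd ha e1' e2' e1 e2
    exact Prod.ext h1 h2
  · intro x y hx hy
    exact lyness_fixed_iff a b c d x y ha hb hc hd hx hy
end

section
/- Let a, b, c, d, e be positive real numbers. A point (x,y) ∈ Q⁺ is a fixed point of the composition map F_{e,d,c,b,a} = F_e ∘ F_d ∘ F_c ∘ F_b ∘ F_a if and only if (b−1)x + (1−d)y + (a−e) = 0 and c·x·y − (e+x)(a+y) + b·x + y + a = 0. Consequently, the set of fixed points of F_{e,d,c,b,a} in Q⁺ either has at most two elements or is infinite. -/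
lemma lyness_key (a b c d e x y : ℝ) (hx : 0 < x) (hy : 0 < y) (ha : 0 < a) (hb : 0 < b)
    (hc : 0 < c) (hd : 0 < d) (he : 0 < e) :
    ((lyness e ∘ lyness d ∘ lyness c ∘ lyness b ∘ lyness a) (x, y) = (x, y) ↔
      (b - 1) * x + (1 - d) * y + (a - e) = 0 ∧
        c * x * y - (e + x) * (a + y) + b * x + y + a = 0) := by
  simp only [lyness, Function.comp, Prod.mk.injEq]
  have hay : 0 < a + y := by linarith
  set z3 : ℝ := (a + y) / x with hz3
  have h3 : 0 < z3 := div_pos hay hx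
  set z4 : ℝ := (b + z3) / y with hz4
  have h4 : 0 < z4 := div_pos (by linarith) hy
  set z5 : ℝ := (c + z4) / z3 with hz5
  have h5 : 0 < z5 := div_pos (by linarith) h3
  have k4 : z4 * (x * y) = b * x + a + y := by
    rw [hz4, hz3]; field_simp; ring
  have k5 : z5 * (y * (a + y)) = c * x * y + b * x + a + y := by
    rw [hz5, hz4, hz3]; field_simp; ring
  clear_value z3 z4 z5
  clear hz3 hz4 hz5
  constructor
  · rintro ⟨h1, h2⟩
    rw [div_eq_iff (ne_of_gt h4)] at h1
    rw [h1, mul_div_assoc, div_self (ne_of_gt h4), mul_one,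
      div_eq_iff (ne_of_gt h5)] at h2
    constructor
    · have key : ((b - 1) * x + (1 - d) * y + (a - e)) * (a + y) = 0 := by
        linear_combination (-(y * (a + y))) * h1 - (a + y) * h2 - (a + y) * k4
      rcases mul_eq_zero.mp key with h | h
      · exact h
      · linarith
    · linear_combination (-(a + y)) * h2 - k5
  · rintro ⟨hL, hQ⟩
    have hex : e + x = y * z5 := by
      have h : (e + x) * (a + y) = (y * z5) * (a + y) := by linear_combination -hQ - k5
      exact mul_right_cancel₀ (ne_of_gt hay) h
    have h1 : d + z5 = x * z4 := by
      have h : (d + z5) * (y * (a + y)) = (x * z4) * (y * (a + y)) := by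
        linear_combination (-(a + y)) * hL - (a + y) * hex - (a + y) * k4
      exact mul_right_cancel₀ (by positivity) h
    refine ⟨by rw [div_eq_iff (ne_of_gt h4)]; exact h1, ?_⟩
    rw [h1, mul_div_assoc, div_self (ne_of_gt h4), mul_one, div_eq_iff (ne_of_gt h5)]
    exact hex

lemma aux_infinite {S : Set (ℝ × ℝ)} {f : ℝ → ℝ × ℝ} {U : Set ℝ} (hU : IsOpen U)
    {t0 : ℝ} (ht0 : t0 ∈ U) (hmem : ∀ t ∈ U, f t ∈ S) (hinj : Set.InjOn f U) :
    S.Infinite := by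
  obtain ⟨ε, hε, hball⟩ := Metric.isOpen_iff.mp hU t0 ht0
  have hIoo : Set.Ioo (t0 - ε) (t0 + ε) ⊆ U := by
    rw [← Real.ball_eq_Ioo]; exact hball
  have hUinf : U.Infinite := (Set.Ioo_infinite (by linarith)).mono hIoo
  exact ((Set.infinite_image_iff hinj).mpr hUinf).mono (Set.image_subset_iff.mpr hmem)

lemma quad_coeffs {A B t2 t3 : ℝ} (e2 : (A * t2 + B) * t2 = 0) (e3 : (A * t3 + B) * t3 = 0)
    (ht2 : t2 ≠ 0) (ht3 : t3 ≠ 0) (hne : t2 ≠ t3) : A = 0 ∧ B = 0 := by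
  have f2 : A * t2 + B = 0 := by rcases mul_eq_zero.mp e2 with h | h; exact h; exact absurd h ht2
  have f3 : A * t3 + B = 0 := by rcases mul_eq_zero.mp e3 with h | h; exact h; exact absurd h ht3
  have hA : A * (t2 - t3) = 0 := by linear_combination f2 - f3
  rcases mul_eq_zero.mp hA with h | h
  · exact ⟨h, by linear_combination f2 - t2 * h⟩
  · exact absurd (sub_eq_zero.mp h) hne

/-- The line case: three distinct parameters on the line give infinitude. -/
lemma line_case (a b c d e : ℝ) (S : Set (ℝ × ℝ))
    (hmem : ∀ p : ℝ × ℝ, p ∈ S ↔ 0 < p.1 ∧ 0 < p.2 ∧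
      (b - 1) * p.1 + (1 - d) * p.2 + (a - e) = 0 ∧
      c * p.1 * p.2 - (e + p.1) * (a + p.2) + b * p.1 + p.2 + a = 0)
    (x1 y1 t2 t3 : ℝ) (hx1 : 0 < x1) (hy1 : 0 < y1)
    (hv : d - 1 ≠ 0 ∨ b - 1 ≠ 0)
    (hL1 : (b - 1) * x1 + (1 - d) * y1 + (a - e) = 0)
    (hQ1 : c * x1 * y1 - (e + x1) * (a + y1) + b * x1 + y1 + a = 0)
    (hQ2 : c * (x1 + t2 * (d - 1)) * (y1 + t2 * (b - 1)) -
      (e + (x1 + t2 * (d - 1))) * (a + (y1 + t2 * (b - 1))) +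
      b * (x1 + t2 * (d - 1)) + (y1 + t2 * (b - 1)) + a = 0)
    (hQ3 : c * (x1 + t3 * (d - 1)) * (y1 + t3 * (b - 1)) -
      (e + (x1 + t3 * (d - 1))) * (a + (y1 + t3 * (b - 1))) +
      b * (x1 + t3 * (d - 1)) + (y1 + t3 * (b - 1)) + a = 0)
    (ht2 : t2 ≠ 0) (ht3 : t3 ≠ 0) (ht23 : t2 ≠ t3) : S.Infinite := by
  set A : ℝ := (c - 1) * (d - 1) * (b - 1) with hA
  set B : ℝ := c * (x1 * (b - 1) + y1 * (d - 1)) - (d - 1) * (a + y1) - (b - 1) * (e + x1)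
      + b * (d - 1) + (b - 1) with hB
  have e2 : (A * t2 + B) * t2 = 0 := by rw [hA, hB]; linear_combination hQ2 - hQ1
  have e3 : (A * t3 + B) * t3 = 0 := by rw [hA, hB]; linear_combination hQ3 - hQ1
  obtain ⟨hA0, hB0⟩ := quad_coeffs e2 e3 ht2 ht3 ht23
  rw [hA] at hA0; rw [hB] at hB0
  clear_value A B
  have ho1 : IsOpen {t : ℝ | 0 < x1 + t * (d - 1)} :=
    isOpen_lt continuous_const (by continuity)
  have ho2 : IsOpen {t : ℝ | 0 < y1 + t * (b - 1)} :=
    isOpen_lt continuous_const (by continuity)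
  have hopen : IsOpen {t : ℝ | 0 < x1 + t * (d - 1) ∧ 0 < y1 + t * (b - 1)} := ho1.inter ho2
  have ht0 : (0 : ℝ) ∈ {t : ℝ | 0 < x1 + t * (d - 1) ∧ 0 < y1 + t * (b - 1)} := by
    constructor <;> simp <;> assumption
  refine aux_infinite (f := fun t => (x1 + t * (d - 1), y1 + t * (b - 1))) hopen ht0 ?_ ?_
  · intro t ht
    rw [hmem]
    exact ⟨ht.1, ht.2, by linear_combination hL1,
      by linear_combination hQ1 + t ^ 2 * hA0 + t * hB0⟩
  · intro s _ t _ h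
    obtain ⟨h1, h2⟩ := Prod.mk.injEq .. ▸ h
    rcases hv with hu | hw
    · exact mul_right_cancel₀ hu (by linarith)
    · exact mul_right_cancel₀ hw (by linarith)

lemma deg_case (a c : ℝ) (ha : 0 < a) (S : Set (ℝ × ℝ))
    (hmem : ∀ p : ℝ × ℝ, p ∈ S ↔ 0 < p.1 ∧ 0 < p.2 ∧
      c * p.1 * p.2 - (a + p.1) * (a + p.2) + p.1 + p.2 + a = 0)
    (x1 y1 : ℝ) (hx1 : 0 < x1) (hy1 : 0 < y1)
    (hQ1 : c * x1 * y1 - (a + x1) * (a + y1) + x1 + y1 + a = 0) : S.Infinite := by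
  by_cases hc1 : c = 1
  · subst hc1
    have ha1 : a = 1 := by
      have h : (1 - a) * (x1 + y1 + a) = 0 := by linear_combination hQ1
      rcases mul_eq_zero.mp h with h | h
      · linarith
      · linarith
    subst ha1
    have hopen : IsOpen (Set.Ioi (0 : ℝ)) := isOpen_Ioi
    refine aux_infinite (f := fun t => (t, t)) hopen (t0 := 1) (by norm_num) ?_ ?_
    · intro t ht
      rw [hmem]
      exact ⟨ht, ht, by ring⟩
    · intro s _ t _ h
      exact congrArg Prod.fst h
  · by_cases ha1 : a = 1
    · subst ha1
      exfalso
      have h : (c - 1) * (x1 * y1) = 0 := by linear_combination hQ1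
      rcases mul_eq_zero.mp h with h | h
      · exact hc1 (by linarith)
      · nlinarith
    · have hN : y1 * ((c - 1) * x1 + (1 - a)) = (a - 1) * (x1 + a) := by
        linear_combination hQ1
      have hD1 : (c - 1) * x1 + (1 - a) ≠ 0 := by
        intro h
        rw [h, mul_zero] at hN
        rcases mul_eq_zero.mp hN.symm with h' | h'
        · exact ha1 (by linarith)
        · linarith
      have ho1 : IsOpen {x : ℝ | 0 < x} := isOpen_lt continuous_const continuous_id
      have ho2 : IsOpen {x : ℝ | 0 < ((a - 1) * (x + a)) * ((c - 1) * x + (1 - a))} :=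
        isOpen_lt continuous_const (by continuity)
      have hopen : IsOpen {x : ℝ | 0 < x ∧
          0 < ((a - 1) * (x + a)) * ((c - 1) * x + (1 - a))} := ho1.inter ho2
      have hmem1 : x1 ∈ {x : ℝ | 0 < x ∧
          0 < ((a - 1) * (x + a)) * ((c - 1) * x + (1 - a))} := by
        refine ⟨hx1, ?_⟩
        have hsq : 0 < ((c - 1) * x1 + (1 - a)) ^ 2 :=
          lt_of_le_of_ne (sq_nonneg _) (Ne.symm (pow_ne_zero 2 hD1))
        have key : ((a - 1) * (x1 + a)) * ((c - 1) * x1 + (1 - a)) =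
            y1 * ((c - 1) * x1 + (1 - a)) ^ 2 := by
          linear_combination ((c - 1) * x1 + (1 - a)) * hN.symm
        rw [key]
        exact mul_pos hy1 hsq
      refine aux_infinite
        (f := fun x => (x, (a - 1) * (x + a) / ((c - 1) * x + (1 - a)))) hopen hmem1 ?_ ?_
      · intro x hx
        obtain ⟨hx0, hprod⟩ := hx
        have hD : (c - 1) * x + (1 - a) ≠ 0 := by
          intro h
          rw [h, mul_zero] at hprod
          exact lt_irrefl 0 hprod
        have hy : 0 < (a - 1) * (x + a) / ((c - 1) * x + (1 - a)) :=
          div_pos_iff.mpr (mul_pos_iff.mp hprod)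
        rw [hmem]
        refine ⟨hx0, hy, ?_⟩
        have hyD : (a - 1) * (x + a) / ((c - 1) * x + (1 - a)) * ((c - 1) * x + (1 - a)) =
            (a - 1) * (x + a) := div_mul_cancel₀ _ hD
        dsimp only
        linear_combination hyD
      · intro s _ t _ h
        exact congrArg Prod.fst h

lemma core_line (a b c d e : ℝ) (S : Set (ℝ × ℝ))
    (hmem : ∀ p : ℝ × ℝ, p ∈ S ↔ 0 < p.1 ∧ 0 < p.2 ∧
      (b - 1) * p.1 + (1 - d) * p.2 + (a - e) = 0 ∧
      c * p.1 * p.2 - (e + p.1) * (a + p.2) + b * p.1 + p.2 + a = 0)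
    (hv : d - 1 ≠ 0 ∨ b - 1 ≠ 0)
    (x1 y1 x2 y2 x3 y3 : ℝ)
    (h1 : (x1, y1) ∈ S) (h2 : (x2, y2) ∈ S) (h3 : (x3, y3) ∈ S)
    (h12 : (x1, y1) ≠ (x2, y2)) (h13 : (x1, y1) ≠ (x3, y3)) (h23 : (x2, y2) ≠ (x3, y3)) :
    S.Infinite := by
  obtain ⟨hx1, hy1, hL1, hQ1⟩ := (hmem _).mp h1
  obtain ⟨hx2, hy2, hL2, hQ2⟩ := (hmem _).mp h2
  obtain ⟨hx3, hy3, hL3, hQ3⟩ := (hmem _).mp h3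
  have param : ∀ x y : ℝ, (b - 1) * x + (1 - d) * y + (a - e) = 0 →
      ∃ t : ℝ, x = x1 + t * (d - 1) ∧ y = y1 + t * (b - 1) := by
    intro x y h
    by_cases hb1 : b - 1 = 0
    · have hd1 : d - 1 ≠ 0 := by
        rcases hv with h' | h'
        · exact h'
        · exact absurd hb1 h'
      have hyy : y = y1 := by
        have hz : (1 - d) * (y - y1) = 0 := by linear_combination h - hL1 - (x - x1) * hb1
        rcases mul_eq_zero.mp hz with h' | h'
        · exact absurd (by linarith) hd1
        · linarith
      refine ⟨(x - x1) / (d - 1), by field_simp; ring, by rw [hb1, mul_zero, add_zero, hyy]⟩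
    · refine ⟨(y - y1) / (b - 1), ?_, by field_simp; ring⟩
      have hrel : (b - 1) * (x - x1) = (d - 1) * (y - y1) := by linear_combination h - hL1
      field_simp
      linear_combination hrel
  obtain ⟨t2, hxt2, hyt2⟩ := param x2 y2 hL2
  obtain ⟨t3, hxt3, hyt3⟩ := param x3 y3 hL3
  have ht2 : t2 ≠ 0 := by
    intro h
    apply h12
    rw [hxt2, hyt2, h]
    norm_num
  have ht3 : t3 ≠ 0 := by
    intro h
    apply h13
    rw [hxt3, hyt3, h]
    norm_num
  have ht23 : t2 ≠ t3 := by
    intro h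
    apply h23
    rw [hxt2, hyt2, hxt3, hyt3, h]
  rw [hxt2, hyt2] at hQ2
  rw [hxt3, hyt3] at hQ3
  exact line_case a b c d e S hmem x1 y1 t2 t3 hx1 hy1 hv hL1 hQ1 hQ2 hQ3 ht2 ht3 ht23

lemma core (a b c d e : ℝ) (ha : 0 < a) (S : Set (ℝ × ℝ))
    (hmem : ∀ p : ℝ × ℝ, p ∈ S ↔ 0 < p.1 ∧ 0 < p.2 ∧
      (b - 1) * p.1 + (1 - d) * p.2 + (a - e) = 0 ∧
      c * p.1 * p.2 - (e + p.1) * (a + p.2) + b * p.1 + p.2 + a = 0)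
    (p1 p2 p3 : ℝ × ℝ)
    (h1 : p1 ∈ S) (h2 : p2 ∈ S) (h3 : p3 ∈ S)
    (h12 : p1 ≠ p2) (h13 : p1 ≠ p3) (h23 : p2 ≠ p3) : S.Infinite := by
  obtain ⟨x1, y1⟩ := p1
  obtain ⟨x2, y2⟩ := p2
  obtain ⟨x3, y3⟩ := p3
  by_cases hb1 : b = 1
  · by_cases hd1 : d = 1
    · subst hb1; subst hd1
      obtain ⟨hx1, hy1, hL1, hQ1⟩ := (hmem _).mp h1
      have hae : e = a := by linear_combination -hL1
      refine deg_case a c ha S ?_ x1 y1 hx1 hy1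
        (by linear_combination hQ1 + (a + y1) * hae)
      intro p
      rw [hmem p]
      constructor
      · rintro ⟨u1, u2, _, u4⟩
        exact ⟨u1, u2, by linear_combination u4 + (a + p.2) * hae⟩
      · rintro ⟨u1, u2, u3⟩
        exact ⟨u1, u2, by linear_combination -hae,
          by linear_combination u3 - (a + p.2) * hae⟩
    · exact core_line a b c d e S hmem (Or.inl (sub_ne_zero.mpr hd1))
        x1 y1 x2 y2 x3 y3 h1 h2 h3 h12 h13 h23
  · exact core_line a b c d e S hmem (Or.inr (sub_ne_zero.mpr hb1))
      x1 y1 x2 y2 x3 y3 h1 h2 h3 h12 h13 h23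

/-- Lemma 10 (ii) of the paper: a point `(x,y)` of the open first quadrant is a fixed
point of `F_{e,d,c,b,a} = F_e ∘ F_d ∘ F_c ∘ F_b ∘ F_a` if and only if
`(b−1)x + (1−d)y + (a−e) = 0` and `cxy − (e+x)(a+y) + bx + y + a = 0`; consequently the
set of such fixed points has at most two elements or is infinite. -/
theorem lyness_five_composition_fixed_points
    (a b c d e : ℝ) (ha : 0 < a) (hb : 0 < b) (hc : 0 < c) (hd : 0 < d) (he : 0 < e) :
    (∀ x y : ℝ, 0 < x → 0 < y →
        ((lyness e ∘ lyness d ∘ lyness c ∘ lyness b ∘ lyness a) (x, y) = (x, y) ↔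
          (b - 1) * x + (1 - d) * y + (a - e) = 0 ∧
            c * x * y - (e + x) * (a + y) + b * x + y + a = 0)) ∧
    ({p : ℝ × ℝ | 0 < p.1 ∧ 0 < p.2 ∧
          (lyness e ∘ lyness d ∘ lyness c ∘ lyness b ∘ lyness a) p = p}.ncard ≤ 2 ∨
      {p : ℝ × ℝ | 0 < p.1 ∧ 0 < p.2 ∧
          (lyness e ∘ lyness d ∘ lyness c ∘ lyness b ∘ lyness a) p = p}.Infinite) := by
  refine ⟨fun x y hx hy => lyness_key a b c d e x y hx hy ha hb hc hd he, ?_⟩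
  set S : Set (ℝ × ℝ) := {p : ℝ × ℝ | 0 < p.1 ∧ 0 < p.2 ∧
      (lyness e ∘ lyness d ∘ lyness c ∘ lyness b ∘ lyness a) p = p} with hS
  have hmem : ∀ p : ℝ × ℝ, p ∈ S ↔ 0 < p.1 ∧ 0 < p.2 ∧
      (b - 1) * p.1 + (1 - d) * p.2 + (a - e) = 0 ∧
      c * p.1 * p.2 - (e + p.1) * (a + p.2) + b * p.1 + p.2 + a = 0 := by
    rintro ⟨px, py⟩
    rw [hS]
    simp only [Set.mem_setOf_eq]
    exact and_congr_right fun hpx => and_congr_right fun hpy =>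
      lyness_key a b c d e px py hpx hpy ha hb hc hd he
  rcases Set.finite_or_infinite S with hfin | hinf
  · left
    by_contra hgt
    push_neg at hgt
    obtain ⟨p1, hp1, p2, hp2, p3, hp3, h12, h13, h23⟩ := (Set.two_lt_ncard hfin).mp hgt
    exact core a b c d e ha S hmem p1 p2 p3 hp1 hp2 hp3 h12 h13 h23 hfin
  · right
    exact hinf
end

section
/- Let a, c be positive real numbers and define the linear map φ(x,y) = (y/c, x/(ac)). Then φ conjugates the composition map F_{1/a, c, ac, a} = F_{1/a} ∘ F_c ∘ F_{ac} ∘ F_a to the Lyness map F_{1/(ac²)}: for every (x,y) ∈ Q⁺, F_{1/(ac²)}(φ(x,y)) = φ(F_{1/a, c, ac, a}(x,y)). -/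
/-- Lemma 11 of the paper: the linear map `φ(x,y) = (y/c, x/(ac))` conjugates the
composition map `F_{1/a, c, ac, a} = F_{1/a} ∘ F_c ∘ F_{ac} ∘ F_a` to the Lyness map
`F_{1/(ac²)}` on the open first quadrant. -/
theorem lyness_four_composition_conjugate
    (a c : ℝ) (ha : 0 < a) (hc : 0 < c) :
    ∀ x y : ℝ, 0 < x → 0 < y →
      lyness (1 / (a * c ^ 2)) (y / c, x / (a * c)) =
        (fun p : ℝ × ℝ => (p.2 / c, p.1 / (a * c)))
          ((lyness (1 / a) ∘ lyness c ∘ lyness (a * c) ∘ lyness a) (x, y)) := by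
  intro x y hx hy
  have ha' := ha.ne'
  have hc' := hc.ne'
  have hx' := hx.ne'
  have hy' := hy.ne'
  have h1 : (a + y) ≠ 0 := by positivity
  have h2 : a * c + (a + y) / x ≠ 0 := by positivity
  have h3 : c + (a * c + (a + y) / x) / y ≠ 0 := by positivity
  simp only [lyness, Function.comp, Prod.mk.injEq]
  constructor
  · field_simp
    ring
  · field_simp
    ring
end

section
/- For every positive real number c, the fifth iterate of the composition map F_{c², c, 1/c, 1/c²} = F_{c²} ∘ F_c ∘ F_{1/c} ∘ F_{1/c²} is the identity on Q⁺: for all (x,y) ∈ Q⁺, (F_{c², c, 1/c, 1/c²})⁵(x,y) = (x,y). Equivalently, the recurrence x_{n+2} = (a_n + x_{n+1})/x_n with the 4-periodic sequence of parameters 1/c², 1/c, c, c², 1/c², 1/c, ... is globally 20-periodic: x_{n+20} = x_n for all n and all positive initial conditions. -/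
/-- Four steps of the Lyness recurrence with parameters `1/c², 1/c, c, c²` send
`(u, v)` to `((c*u+1)/v, c²*u)`. -/
lemma lyness_four_step (c u v w3 w4 w5 w6 : ℝ) (hc : 0 < c) (hu : 0 < u) (hv : 0 < v)
    (h3 : w3 = (1 / c ^ 2 + v) / u) (h4 : w4 = (1 / c + w3) / v)
    (h5 : w5 = (c + w4) / w3) (h6 : w6 = (c ^ 2 + w5) / w4) :
    w5 = (c * u + 1) / v ∧ w6 = c ^ 2 * u := by
  have hc' : c ≠ 0 := hc.ne'
  have hu' : u ≠ 0 := hu.ne'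
  have hv' : v ≠ 0 := hv.ne'
  have hA : (0:ℝ) < 1 / c ^ 2 + v := by positivity
  have hA' : (1 / c ^ 2 + v : ℝ) ≠ 0 := hA.ne'
  have hw3 : 0 < w3 := by rw [h3]; positivity
  have hw3' : w3 ≠ 0 := hw3.ne'
  have hB : (0:ℝ) < 1 / c + w3 := by positivity
  have hB' : (1 / c + w3 : ℝ) ≠ 0 := hB.ne'
  have hw4 : 0 < w4 := by rw [h4]; positivity
  have hw4' : w4 ≠ 0 := hw4.ne'
  have e5 : w5 = (c * u + 1) / v := by
    rw [h5, h4, h3]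
    field_simp
    ring
  refine ⟨e5, ?_⟩
  rw [h6, e5, h4, h3]
  field_simp
  ring

/-- The composition `F_{c²} ∘ F_c ∘ F_{1/c} ∘ F_{1/c²}` acts on the positive quadrant as
`(u, v) ↦ ((c*u+1)/v, c²*u)`. -/
lemma lyness_comp_eq (c u v : ℝ) (hc : 0 < c) (hu : 0 < u) (hv : 0 < v) :
    lyness (c ^ 2) (lyness c (lyness (1 / c) (lyness (1 / c ^ 2) (u, v)))) =
      ((c * u + 1) / v, c ^ 2 * u) := by
  obtain ⟨e5, e6⟩ := lyness_four_step c u v ((1 / c ^ 2 + v) / u)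
      ((1 / c + (1 / c ^ 2 + v) / u) / v)
      ((c + (1 / c + (1 / c ^ 2 + v) / u) / v) / ((1 / c ^ 2 + v) / u))
      ((c ^ 2 + (c + (1 / c + (1 / c ^ 2 + v) / u) / v) / ((1 / c ^ 2 + v) / u)) /
        ((1 / c + (1 / c ^ 2 + v) / u) / v))
      hc hu hv rfl rfl rfl rfl
  show ((c + (1 / c + (1 / c ^ 2 + v) / u) / v) / ((1 / c ^ 2 + v) / u),
      (c ^ 2 + (c + (1 / c + (1 / c ^ 2 + v) / u) / v) / ((1 / c ^ 2 + v) / u)) /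
        ((1 / c + (1 / c ^ 2 + v) / u) / v)) = ((c * u + 1) / v, c ^ 2 * u)
  rw [e6, e5]

/-- Corollary 12 of the paper: the fifth iterate of `F_{c²,c,1/c,1/c²} = F_{c²} ∘ F_c ∘
F_{1/c} ∘ F_{1/c²}` is the identity on the open first quadrant; equivalently, the Lyness
recurrence with the `4`-periodic sequence of parameters `1/c², 1/c, c, c², …` is globally
`20`-periodic. -/
theorem lyness_four_composition_globally_twenty_periodic
    (c : ℝ) (hc : 0 < c) :
    (∀ x y : ℝ, 0 < x → 0 < y →
      (lyness (c ^ 2) ∘ lyness c ∘ lyness (1 / c) ∘ lyness (1 / c ^ 2))^[5] (x, y) =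
        (x, y)) ∧
    (∀ A : ℕ → ℝ, A 1 = 1 / c ^ 2 → A 2 = 1 / c → A 3 = c → A 4 = c ^ 2 →
      (∀ n, 1 ≤ n → A (n + 4) = A n) →
      ∀ x : ℕ → ℝ, 0 < x 1 → 0 < x 2 →
        (∀ n, 1 ≤ n → x (n + 2) = (A n + x (n + 1)) / x n) →
        ∀ n, 1 ≤ n → x (n + 20) = x n) := by
  have hc' : c ≠ 0 := hc.ne'
  constructor
  · -- the map part
    intro x y hx hy
    have hx' : x ≠ 0 := hx.ne'
    have hy' : y ≠ 0 := hy.ne'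
    have e1 : lyness (c ^ 2) (lyness c (lyness (1 / c) (lyness (1 / c ^ 2) (x, y)))) =
        ((c * x + 1) / y, c ^ 2 * x) := lyness_comp_eq c x y hc hx hy
    have e2 : lyness (c ^ 2) (lyness c (lyness (1 / c)
          (lyness (1 / c ^ 2) ((c * x + 1) / y, c ^ 2 * x)))) =
        ((c ^ 2 * x + c + y) / (c ^ 2 * x * y), c ^ 2 * (c * x + 1) / y) := by
      rw [lyness_comp_eq c _ _ hc (by positivity) (by positivity)]
      refine Prod.ext ?_ ?_ <;> (simp only; field_simp; try ring)
    have e3 : lyness (c ^ 2) (lyness c (lyness (1 / c)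
          (lyness (1 / c ^ 2) ((c ^ 2 * x + c + y) / (c ^ 2 * x * y), c ^ 2 * (c * x + 1) / y)))) =
        ((c + y) / (c ^ 3 * x), (c ^ 2 * x + c + y) / (x * y)) := by
      rw [lyness_comp_eq c _ _ hc (by positivity) (by positivity)]
      refine Prod.ext ?_ ?_ <;> (simp only; field_simp; try ring)
    have e4 : lyness (c ^ 2) (lyness c (lyness (1 / c)
          (lyness (1 / c ^ 2) ((c + y) / (c ^ 3 * x), (c ^ 2 * x + c + y) / (x * y))))) =
        (y / c ^ 2, (c + y) / (c * x)) := by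
      rw [lyness_comp_eq c _ _ hc (by positivity) (by positivity)]
      refine Prod.ext ?_ ?_ <;> (simp only; field_simp; try ring)
    have e5 : lyness (c ^ 2) (lyness c (lyness (1 / c)
          (lyness (1 / c ^ 2) (y / c ^ 2, (c + y) / (c * x))))) = (x, y) := by
      rw [lyness_comp_eq c _ _ hc (by positivity) (by positivity)]
      refine Prod.ext ?_ ?_ <;> (simp only; field_simp; try ring)
    simp only [Function.iterate_succ, Function.iterate_zero, Function.comp_apply, id_eq]
    rw [e1, e2, e3, e4, e5]
  · -- the sequence part
    intro A hA1 hA2 hA3 hA4 hAper x hx1 hx2 hrec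
    -- values of A up to index 20
    have hA5 : A 5 = 1 / c ^ 2 := by simpa [hA1] using hAper 1 (by norm_num)
    have hA6 : A 6 = 1 / c := by simpa [hA2] using hAper 2 (by norm_num)
    have hA7 : A 7 = c := by simpa [hA3] using hAper 3 (by norm_num)
    have hA8 : A 8 = c ^ 2 := by simpa [hA4] using hAper 4 (by norm_num)
    have hA9 : A 9 = 1 / c ^ 2 := by simpa [hA5] using hAper 5 (by norm_num)
    have hA10 : A 10 = 1 / c := by simpa [hA6] using hAper 6 (by norm_num)
    have hA11 : A 11 = c := by simpa [hA7] using hAper 7 (by norm_num)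
    have hA12 : A 12 = c ^ 2 := by simpa [hA8] using hAper 8 (by norm_num)
    have hA13 : A 13 = 1 / c ^ 2 := by simpa [hA9] using hAper 9 (by norm_num)
    have hA14 : A 14 = 1 / c := by simpa [hA10] using hAper 10 (by norm_num)
    have hA15 : A 15 = c := by simpa [hA11] using hAper 11 (by norm_num)
    have hA16 : A 16 = c ^ 2 := by simpa [hA12] using hAper 12 (by norm_num)
    have hA17 : A 17 = 1 / c ^ 2 := by simpa [hA13] using hAper 13 (by norm_num)
    have hA18 : A 18 = 1 / c := by simpa [hA14] using hAper 14 (by norm_num)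
    have hA19 : A 19 = c := by simpa [hA15] using hAper 15 (by norm_num)
    have hA20 : A 20 = c ^ 2 := by simpa [hA16] using hAper 16 (by norm_num)
    -- recurrence instances
    have r1 : x 3 = (1 / c ^ 2 + x 2) / x 1 := by simpa [hA1] using hrec 1 (by norm_num)
    have r2 : x 4 = (1 / c + x 3) / x 2 := by simpa [hA2] using hrec 2 (by norm_num)
    have r3 : x 5 = (c + x 4) / x 3 := by simpa [hA3] using hrec 3 (by norm_num)
    have r4 : x 6 = (c ^ 2 + x 5) / x 4 := by simpa [hA4] using hrec 4 (by norm_num)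
    have r5 : x 7 = (1 / c ^ 2 + x 6) / x 5 := by simpa [hA5] using hrec 5 (by norm_num)
    have r6 : x 8 = (1 / c + x 7) / x 6 := by simpa [hA6] using hrec 6 (by norm_num)
    have r7 : x 9 = (c + x 8) / x 7 := by simpa [hA7] using hrec 7 (by norm_num)
    have r8 : x 10 = (c ^ 2 + x 9) / x 8 := by simpa [hA8] using hrec 8 (by norm_num)
    have r9 : x 11 = (1 / c ^ 2 + x 10) / x 9 := by simpa [hA9] using hrec 9 (by norm_num)
    have r10 : x 12 = (1 / c + x 11) / x 10 := by simpa [hA10] using hrec 10 (by norm_num)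
    have r11 : x 13 = (c + x 12) / x 11 := by simpa [hA11] using hrec 11 (by norm_num)
    have r12 : x 14 = (c ^ 2 + x 13) / x 12 := by simpa [hA12] using hrec 12 (by norm_num)
    have r13 : x 15 = (1 / c ^ 2 + x 14) / x 13 := by simpa [hA13] using hrec 13 (by norm_num)
    have r14 : x 16 = (1 / c + x 15) / x 14 := by simpa [hA14] using hrec 14 (by norm_num)
    have r15 : x 17 = (c + x 16) / x 15 := by simpa [hA15] using hrec 15 (by norm_num)
    have r16 : x 18 = (c ^ 2 + x 17) / x 16 := by simpa [hA16] using hrec 16 (by norm_num)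
    have r17 : x 19 = (1 / c ^ 2 + x 18) / x 17 := by simpa [hA17] using hrec 17 (by norm_num)
    have r18 : x 20 = (1 / c + x 19) / x 18 := by simpa [hA18] using hrec 18 (by norm_num)
    have r19 : x 21 = (c + x 20) / x 19 := by simpa [hA19] using hrec 19 (by norm_num)
    have r20 : x 22 = (c ^ 2 + x 21) / x 20 := by simpa [hA20] using hrec 20 (by norm_num)
    have hx1' : x 1 ≠ 0 := hx1.ne'
    have hx2' : x 2 ≠ 0 := hx2.ne'
    -- five blocks of four steps
    obtain ⟨e5, e6⟩ := lyness_four_step c (x 1) (x 2) (x 3) (x 4) (x 5) (x 6)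
      hc hx1 hx2 r1 r2 r3 r4
    have hx5 : 0 < x 5 := by rw [e5]; positivity
    have hx6 : 0 < x 6 := by rw [e6]; positivity
    obtain ⟨e9, e10⟩ := lyness_four_step c (x 5) (x 6) (x 7) (x 8) (x 9) (x 10)
      hc hx5 hx6 r5 r6 r7 r8
    have hx9 : 0 < x 9 := by rw [e9]; positivity
    have hx10 : 0 < x 10 := by rw [e10]; positivity
    obtain ⟨e13, e14⟩ := lyness_four_step c (x 9) (x 10) (x 11) (x 12) (x 13) (x 14)
      hc hx9 hx10 r9 r10 r11 r12
    have hx13 : 0 < x 13 := by rw [e13]; positivity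
    have hx14 : 0 < x 14 := by rw [e14]; positivity
    obtain ⟨e17, e18⟩ := lyness_four_step c (x 13) (x 14) (x 15) (x 16) (x 17) (x 18)
      hc hx13 hx14 r13 r14 r15 r16
    have hx17 : 0 < x 17 := by rw [e17]; positivity
    have hx18 : 0 < x 18 := by rw [e18]; positivity
    obtain ⟨e21, e22⟩ := lyness_four_step c (x 17) (x 18) (x 19) (x 20) (x 21) (x 22)
      hc hx17 hx18 r17 r18 r19 r20
    -- closed forms in terms of x 1 and x 2
    have f9 : x 9 = (c ^ 2 * x 1 + c + x 2) / (c ^ 2 * x 1 * x 2) := by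
      rw [e9, e5, e6]; field_simp
    have f10 : x 10 = c ^ 2 * (c * x 1 + 1) / x 2 := by
      rw [e10, e5]; ring
    have f13 : x 13 = (c + x 2) / (c ^ 3 * x 1) := by
      rw [e13, f9, f10]; field_simp; ring
    have f14 : x 14 = (c ^ 2 * x 1 + c + x 2) / (x 1 * x 2) := by
      rw [e14, f9]; field_simp
    have f17 : x 17 = x 2 / c ^ 2 := by
      rw [e17, f13, f14]
      have h1 : (0:ℝ) < c ^ 2 * x 1 + c + x 2 := by positivity
      field_simp
      ring
    have f18 : x 18 = (c + x 2) / (c * x 1) := by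
      rw [e18, f13]; field_simp
    have hx21 : x 21 = x 1 := by
      rw [e21, f17, f18]
      have h1 : (0:ℝ) < c + x 2 := by positivity
      field_simp
      ring
    have hx22 : x 22 = x 2 := by
      rw [e22, f17]; field_simp
    -- 20-periodicity of A
    have hAper20 : ∀ j : ℕ, 1 ≤ j → A (j + 20) = A j := by
      intro j hj
      have p1 := hAper j hj
      have p2 := hAper (j + 4) (by omega)
      have p3 := hAper (j + 8) (by omega)
      have p4 := hAper (j + 12) (by omega)
      have p5 := hAper (j + 16) (by omega)
      simp only [show j + 4 + 4 = j + 8 from by omega, show j + 8 + 4 = j + 12 from by omega,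
        show j + 12 + 4 = j + 16 from by omega, show j + 16 + 4 = j + 20 from by omega]
        at p2 p3 p4 p5
      rw [p5, p4, p3, p2, p1]
    -- induction
    have key : ∀ m : ℕ, x (m + 21) = x (m + 1) ∧ x (m + 22) = x (m + 2) := by
      intro m
      induction m with
      | zero => exact ⟨by simpa using hx21, by simpa using hx22⟩
      | succ k ih =>
        constructor
        · simpa [show k + 1 + 21 = k + 22 from by omega, show k + 1 + 1 = k + 2 from by omega]
            using ih.2
        · have s1 := hrec (k + 21) (by omega)
          have s2 := hrec (k + 1) (by omega)
          simp only [show k + 21 + 2 = k + 23 from by omega,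
            show k + 21 + 1 = k + 22 from by omega, show k + 1 + 2 = k + 3 from by omega,
            show k + 1 + 1 = k + 2 from by omega] at s1 s2
          have hA' : A (k + 21) = A (k + 1) := by
            simpa [show k + 1 + 20 = k + 21 from by omega] using hAper20 (k + 1) (by omega)
          simp only [show k + 1 + 22 = k + 23 from by omega,
            show k + 1 + 2 = k + 3 from by omega]
          rw [s1, ih.1, ih.2, hA', ← s2]
    intro n hn
    obtain ⟨m, rfl⟩ : ∃ m, n = m + 1 := ⟨n - 1, by omega⟩
    simpa [show m + 1 + 20 = m + 21 from by omega] using (key m).1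
end
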